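/- arXiv:1403.6541 — 4 statements merged into one kernel-verified Lean document; each statement's English description precedes it below -/
import Mathlib

section
/- Let r ∈ ℕ, r ≥ 1, n = 2^r, 0 ≤ l ≤ r−1 and 0 ≤ p ≤ 2^l−1. For every ω ∈ ℤ with −2^{r−1}+1 ≤ ω ≤ 2^{r−1} and ω ≠ 0, the modulus of the discrete Fourier transform of the Haar wavelet satisfies |Fφ_{l,p}(ω)| = 2^{l/2−r+1} · sin²(πω/2^{l+1}) / |sin(πω/2^r)|. -/
/-- The discrete Fourier transform of `x ∈ ℂ^(2^r)`:
`Fx(ω) = n^{-1/2} ∑_{t=0}^{n-1} x(t) e^{2πiωt/n}` with `n = 2^r`. -/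
noncomputable def dft (r : ℕ) (x : Fin (2^r) → ℂ) (ω : ℤ) : ℂ :=
  (Real.sqrt (2^r) : ℂ)⁻¹ *
    ∑ t : Fin (2^r), x t * Complex.exp (2 * Real.pi * Complex.I * (ω : ℂ) * ((t : ℕ) : ℂ) / (2^r : ℂ))

/-- The Haar scaling vector `ψ(t) = 2^{-r/2}`. -/
noncomputable def haarPsi (r : ℕ) : Fin (2^r) → ℂ :=
  fun _ => (((2:ℝ) ^ (-(r:ℝ)/2) : ℝ) : ℂ)

/-- The discrete Haar wavelet at scale `j` and position `p`. -/
noncomputable def haarPhi (r j p : ℕ) : Fin (2^r) → ℂ := fun t =>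
  if p * 2^(r-j) ≤ (t:ℕ) ∧ (t:ℕ) < p * 2^(r-j) + 2^(r-j-1) then
    (((2:ℝ) ^ (((j:ℝ) - r)/2) : ℝ) : ℂ)
  else if p * 2^(r-j) + 2^(r-j-1) ≤ (t:ℕ) ∧ (t:ℕ) < (p+1) * 2^(r-j) then
    -(((2:ℝ) ^ (((j:ℝ) - r)/2) : ℝ) : ℂ)
  else 0

/-- The frequency bands: `W_0 = {0,1}` and
`W_j = {-2^j+1,…,-2^{j-1}} ∪ {2^{j-1}+1,…,2^j}` for `j ≥ 1`. -/
noncomputable def bandW (j : ℕ) : Finset ℤ :=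
  if j = 0 then {0, 1}
  else Finset.Icc (-(2:ℤ)^j + 1) (-(2:ℤ)^(j-1)) ∪ Finset.Icc ((2:ℤ)^(j-1) + 1) ((2:ℤ)^j)

lemma exp_mul_I_sub_one (z : ℂ) :
    Complex.exp (z * Complex.I) - 1
      = Complex.exp (z/2 * Complex.I) * (2 * Complex.I * Complex.sin (z/2)) := by
  rw [Complex.sin]
  have e1 : Complex.exp (z/2 * Complex.I) * Complex.exp (z/2 * Complex.I)
      = Complex.exp (z * Complex.I) := by rw [← Complex.exp_add]; ring_nf
  have e2 : Complex.exp (z/2 * Complex.I) * Complex.exp (-(z/2) * Complex.I) = 1 := by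
    rw [← Complex.exp_add, show z/2 * Complex.I + -(z/2) * Complex.I = 0 by ring, Complex.exp_zero]
  have isq : Complex.I * Complex.I = -1 := Complex.I_mul_I
  linear_combination -e1 + e2 - Complex.exp (z/2 * Complex.I) *
    (Complex.exp (-(z/2) * Complex.I) - Complex.exp (z/2 * Complex.I)) * isq

lemma abs_exp_mul_I_sub_one (θ : ℝ) :
    ‖Complex.exp ((θ:ℂ) * Complex.I) - 1‖ = 2 * |Real.sin (θ/2)| := by
  rw [exp_mul_I_sub_one, norm_mul, show ((θ:ℂ)/2) = ((θ/2 : ℝ) : ℂ) by push_cast; ring,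
    Complex.norm_exp_ofReal_mul_I, one_mul, norm_mul, norm_mul,
    Complex.norm_two, Complex.norm_I, ← Complex.ofReal_sin, Complex.norm_real, Real.norm_eq_abs, mul_one]

/-- For `r ≥ 1`, `0 ≤ l ≤ r-1`, `0 ≤ p ≤ 2^l-1`, and nonzero `ω ∈ {-2^{r-1}+1,…,2^{r-1}}`:
`|Fφ_{l,p}(ω)| = 2^{l/2-r+1} sin²(πω/2^{l+1}) / |sin(πω/2^r)|`. -/
theorem abs_dft_haarPhi (r l p : ℕ) (hr : 1 ≤ r) (hl : l ≤ r - 1) (hp : p ≤ 2^l - 1)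
    (ω : ℤ) (hω₁ : -(2:ℤ)^(r-1) + 1 ≤ ω) (hω₂ : ω ≤ (2:ℤ)^(r-1)) (hω0 : ω ≠ 0) :
    ‖dft r (haarPhi r l p) ω‖ =
      (2:ℝ) ^ ((l:ℝ)/2 - r + 1) * (Real.sin (Real.pi * (ω : ℝ) / 2^(l+1)))^2 /
        |Real.sin (Real.pi * (ω : ℝ) / 2^r)| := by
  have hlr : l + 1 ≤ r := by omega
  set c : ℝ := (2:ℝ) ^ (((l:ℝ) - r)/2) with hc
  have hcpos : 0 < c := Real.rpow_pos_of_pos (by norm_num) _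
  set θ : ℝ := 2 * Real.pi * ω / 2^r with hθ
  set q : ℂ := Complex.exp ((θ:ℂ) * Complex.I) with hqdef
  have hm2 : (2:ℕ)^(r-l) = 2^(r-l-1) + 2^(r-l-1) := by
    have e : r - l = (r - l - 1) + 1 := by omega
    conv_lhs => rw [e]
    rw [pow_succ]; omega
  have hsplit : (p+1) * 2^(r-l) = p * 2^(r-l) + 2^(r-l-1) + 2^(r-l-1) := by
    calc (p+1) * 2^(r-l) = p * 2^(r-l) + 2^(r-l) := by ring
    _ = _ := by rw [hm2]; ring
  have han : p * 2^(r-l) + 2^(r-l-1) + 2^(r-l-1) ≤ 2^r := by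
    have hp1 : p + 1 ≤ 2^l := by have := Nat.one_le_two_pow (n := l); omega
    rw [← hsplit]
    calc (p+1) * 2^(r-l) ≤ 2^l * 2^(r-l) := Nat.mul_le_mul_right _ hp1
    _ = 2^r := by rw [← pow_add]; congr 1; omega
  have hq : ∀ t : ℕ, Complex.exp (2 * Real.pi * Complex.I * (ω:ℂ) * (t:ℂ) / (2^r:ℂ)) = q ^ t := by
    intro t
    rw [hqdef, ← Complex.exp_nat_mul]
    congr 1
    rw [hθ]; push_cast; ring
  -- q ≠ 1
  have hq1 : q ≠ 1 := by
    intro hq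
    rw [hqdef, Complex.exp_eq_one_iff] at hq
    obtain ⟨k, hk⟩ := hq
    have h1 : (θ:ℂ) = ((k * (2*Real.pi) : ℝ):ℂ) := by
      apply mul_right_cancel₀ Complex.I_ne_zero
      rw [hk]; push_cast; ring
    have hθk : θ = (k:ℝ) * (2*Real.pi) := by exact_mod_cast h1
    have h2π : (2*Real.pi) ≠ 0 := by positivity
    have e1 : (2*Real.pi) * ((ω:ℝ)/2^r) = (2*Real.pi) * k := by
      rw [hθ] at hθk; linear_combination hθk
    have e : (ω:ℝ)/2^r = k := mul_left_cancel₀ h2π e1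
    have hωr : (ω:ℝ) = k * 2^r := by
      rw [div_eq_iff (by positivity : ((2:ℝ)^r) ≠ 0)] at e; exact e
    have hωk' : ω = k * 2^r := by exact_mod_cast hωr
    have hpow : (2:ℤ)^(r-1) * 2 = 2^r := by
      rw [← pow_succ]; congr 1; omega
    have h2pos : (0:ℤ) < 2^r := by positivity
    rcases lt_trichotomy k 0 with hk0 | hk0 | hk0
    · have hk1 : k ≤ -1 := by omega
      have : k * 2^r ≤ -1 * 2^r := mul_le_mul_of_nonneg_right hk1 (le_of_lt h2pos)
      have hb : (0:ℤ) < 2^(r-1) := by positivity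
      linarith
    · simp [hk0] at hωk'; exact hω0 hωk'
    · have hk1 : (1:ℤ) ≤ k := by omega
      have : 1 * 2^r ≤ k * 2^r := mul_le_mul_of_nonneg_right hk1 (le_of_lt h2pos)
      have hb : (0:ℤ) < 2^(r-1) := by positivity
      linarith
  have hq1' : q - 1 ≠ 0 := sub_ne_zero.mpr hq1
  -- the sum
  have hsum : (∑ t : Fin (2^r), haarPhi r l p t *
        Complex.exp (2 * Real.pi * Complex.I * (ω:ℂ) * ((t:ℕ):ℂ) / (2^r:ℂ)))
      = (c:ℂ) * (-(q^(p * 2^(r-l)) * (q^(2^(r-l-1)) - 1)^2) / (q - 1)) := by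
    have step1 : (∑ t : Fin (2^r), haarPhi r l p t *
          Complex.exp (2 * Real.pi * Complex.I * (ω:ℂ) * ((t:ℕ):ℂ) / (2^r:ℂ)))
        = ∑ t ∈ Finset.range (2^r),
            ((if t ∈ Finset.Ico (p * 2^(r-l)) (p * 2^(r-l) + 2^(r-l-1)) then (c:ℂ) * q^t else 0)
              - (if t ∈ Finset.Ico (p * 2^(r-l) + 2^(r-l-1)) (p * 2^(r-l) + 2^(r-l-1) + 2^(r-l-1))
                  then (c:ℂ) * q^t else 0)) := by
      rw [← Fin.sum_univ_eq_sum_range]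
      refine Finset.sum_congr rfl fun t _ => ?_
      obtain ⟨t, ht⟩ := t
      rw [hq]
      simp only [Fin.val_mk]
      simp only [haarPhi, Finset.mem_Ico, ← hc, hsplit]
      generalize p * 2^(r-l) = A
      generalize (2:ℕ)^(r-l-1) = B
      split_ifs <;> (try ring) <;> (exfalso; omega)
    rw [step1, Finset.sum_sub_distrib, Finset.sum_ite_mem, Finset.sum_ite_mem,
      Finset.inter_eq_right.mpr, Finset.inter_eq_right.mpr,
      ← Finset.mul_sum, ← Finset.mul_sum, geom_sum_Ico hq1 (Nat.le_add_right _ _),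
      geom_sum_Ico hq1 (Nat.le_add_right _ _)]
    · rw [← mul_sub, div_sub_div_same]
      congr 1
      rw [div_eq_div_iff hq1' hq1', pow_add, pow_add, pow_add]
      ring
    · rw [Finset.range_eq_Ico]
      exact Finset.Ico_subset_Ico (Nat.zero_le _)
        (by linarith [han, Nat.zero_le ((2:ℕ)^(r-l-1))])
    · rw [Finset.range_eq_Ico]
      exact Finset.Ico_subset_Ico (Nat.zero_le _)
        (by linarith [han, Nat.zero_le ((2:ℕ)^(r-l-1))])
  rw [dft, hsum]
  have hqa : ‖q ^ (p * 2^(r-l))‖ = 1 := by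
    rw [norm_pow, hqdef, Complex.norm_exp_ofReal_mul_I, one_pow]
  have hkey : (2:ℝ)^(r-l-1) * 2 * 2^l = 2^r := by
    rw [← pow_succ, ← pow_add]; congr 1; omega
  have hθ1 : ((2^(r-l-1) : ℕ):ℝ) * θ = Real.pi * ω / 2^l := by
    rw [hθ]; push_cast
    have h2l : ((2:ℝ)^l) ≠ 0 := by positivity
    have h2r : ((2:ℝ)^r) ≠ 0 := by positivity
    field_simp
    linear_combination hkey
  have hqh : q ^ (2^(r-l-1) : ℕ) = Complex.exp (((Real.pi * ω / 2^l : ℝ):ℂ) * Complex.I) := by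
    rw [hqdef, ← Complex.exp_nat_mul]
    congr 1
    rw [← hθ1]; push_cast; ring
  have habs1 : ‖q ^ (2^(r-l-1) : ℕ) - 1‖
      = 2 * |Real.sin (Real.pi * ω / 2^(l+1))| := by
    rw [hqh, abs_exp_mul_I_sub_one,
      show Real.pi * (ω:ℝ) / 2^l / 2 = Real.pi * ω / 2^(l+1) by rw [pow_succ]; ring]
  have habs2 : ‖q - 1‖ = 2 * |Real.sin (Real.pi * ω / 2^r)| := by
    rw [hqdef, abs_exp_mul_I_sub_one, show θ/2 = Real.pi * (ω:ℝ) / 2^r by rw [hθ]; ring]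
  have hs2ne : Real.sin (Real.pi * (ω:ℝ) / 2^r) ≠ 0 := by
    have h0 : ‖q - 1‖ ≠ 0 := norm_ne_zero_iff.mpr hq1'
    rw [habs2] at h0
    intro h; rw [h] at h0; simp at h0
  -- now pure real computation
  rw [norm_mul, norm_mul, norm_div, norm_neg, norm_mul, hqa, one_mul, norm_pow,
    habs1, habs2, norm_inv, Complex.norm_real, Real.norm_eq_abs, Complex.norm_real, Real.norm_eq_abs,
    abs_of_nonneg (Real.sqrt_nonneg _), abs_of_pos hcpos]
  set s1 := Real.sin (Real.pi * (ω:ℝ) / 2^(l+1))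
  set s2 := Real.sin (Real.pi * (ω:ℝ) / 2^r)
  have hs2abs : |s2| ≠ 0 := abs_ne_zero.mpr hs2ne
  have hsqrt : Real.sqrt (2^r) = (2:ℝ) ^ ((r:ℝ)/2) := by
    rw [Real.sqrt_eq_rpow, ← Real.rpow_natCast 2 r, ← Real.rpow_mul (by norm_num : (0:ℝ) ≤ 2)]
    ring_nf
  have hcoef : ((2:ℝ)^((r:ℝ)/2))⁻¹ * c * 2 = (2:ℝ)^((l:ℝ)/2 - r + 1) := by
    rw [hc, ← Real.rpow_neg (by norm_num : (0:ℝ) ≤ 2), ← Real.rpow_add (by norm_num : (0:ℝ) < 2),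
      ← Real.rpow_add_one (by norm_num : (2:ℝ) ≠ 0)]
    congr 1
    ring
  rw [hsqrt]
  calc ((2:ℝ)^((r:ℝ)/2))⁻¹ * (c * ((2*|s1|)^2/(2*|s2|)))
      = (((2:ℝ)^((r:ℝ)/2))⁻¹ * c * 2) * (|s1|^2/|s2|) := by
        have h2pos : (0:ℝ) < (2:ℝ)^((r:ℝ)/2) := Real.rpow_pos_of_pos (by norm_num) _
        field_simp
    _ = (2:ℝ)^((l:ℝ)/2 - r + 1) * s1^2/|s2| := by rw [hcoef, sq_abs]; ring
end

section
/- Let r ∈ ℕ, r ≥ 1, n = 2^r. For all 0 ≤ j, l ≤ r−1, the coherence of the Fourier–Haar block U_{jl} satisfies μ(U_{jl}) ≤ (π⁴/16) · 2^{−j} · 2^{−|j−l|}. -/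
theorem bandW_nonempty (j : ℕ) : (bandW j).Nonempty := by
  unfold bandW
  split
  · exact ⟨0, by simp⟩
  · refine Finset.Nonempty.mono Finset.subset_union_right ⟨(2:ℤ)^j, ?_⟩
    rw [Finset.mem_Icc]
    refine ⟨?_, le_refl _⟩
    have h1 : (1:ℤ) ≤ (2:ℤ)^(j-1) := one_le_pow₀ (by norm_num)
    have h2 : (2:ℤ)^(j-1) + (2:ℤ)^(j-1) ≤ (2:ℤ)^j := by
      rw [← two_mul, ← pow_succ']
      exact pow_le_pow_right₀ (by norm_num) (by omega)
    omega

/-- The number of columns of the Fourier–Haar block `U_{jl}`: level `0` contributes the two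
vectors `ψ, φ_{0,0}`, and level `l ≥ 1` contributes the `2^l` wavelets `φ_{l,p}`. -/
def numCols (l : ℕ) : ℕ := if l = 0 then 2 else 2^l

theorem numCols_pos (l : ℕ) : 0 < numCols l := by
  unfold numCols; split <;> positivity

/-- The entry of the Fourier–Haar block `U_{jl}` in row `ω` and column `q`. -/
noncomputable def Uentry (r l : ℕ) (ω : ℤ) (q : ℕ) : ℂ :=
  if l = 0 then (if q = 0 then dft r (haarPsi r) ω else dft r (haarPhi r 0 0) ω)
  else dft r (haarPhi r l q) ω

/-- The coherence `μ(U_{jl}) = max_{ω,q} |(U_{jl})_{ω,q}|²` of the Fourier–Haar block. -/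
noncomputable def coherence (r j l : ℕ) : ℝ :=
  ((bandW j) ×ˢ Finset.range (numCols l)).sup'
    (Finset.Nonempty.product (bandW_nonempty j)
      ⟨0, Finset.mem_range.mpr (numCols_pos l)⟩)
    (fun q => ‖Uentry r l q.1 q.2‖ ^ 2)

/-- The Fourier–Haar block `U_{jl}`, with rows indexed by `ω ∈ W_j` and columns given by the
DFT of the level-`l` Haar vectors. -/
noncomputable def Umat (r j l : ℕ) : Matrix (bandW j) (Fin (numCols l)) ℂ :=
  fun ω q => Uentry r l (ω : ℤ) (q : ℕ)

/-- The `ℓ² → ℓ²` operator norm (largest singular value) of the Fourier–Haar block. -/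
noncomputable def UopNorm (r j l : ℕ) : ℝ :=
  ‖LinearMap.toContinuousLinearMap (Matrix.toEuclideanLin (Umat r j l))‖

/-- The `(j,l)`-th local coherence `μ(j,l) = √μ(U_{jl}) · max_{l' < r} √μ(U_{jl'})`. -/
noncomputable def localCoh (r : ℕ) (hr : 1 ≤ r) (j l : ℕ) : ℝ :=
  Real.sqrt (coherence r j l) *
    (Finset.range r).sup' ⟨0, Finset.mem_range.mpr hr⟩
      (fun l' => Real.sqrt (coherence r j l'))

open Complex Finset


lemma abs_dft_psi_zero (r : ℕ) : ‖dft r (haarPsi r) 0‖ = 1 := by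
  unfold dft haarPsi
  simp only [Int.cast_zero, mul_zero, zero_mul, zero_div, Complex.exp_zero, mul_one]
  rw [Finset.sum_const, Finset.card_univ, Fintype.card_fin, nsmul_eq_mul]
  rw [norm_mul, norm_mul, norm_inv]
  rw [Complex.norm_real, Complex.norm_real, Complex.norm_natCast, Real.norm_eq_abs, Real.norm_eq_abs]
  rw [_root_.abs_of_nonneg (Real.sqrt_nonneg _), _root_.abs_of_nonneg (by positivity : (0:ℝ) ≤ 2 ^ (-(r:ℝ)/2))]
  have h1 : Real.sqrt (2^r) = (2:ℝ)^((r:ℝ)/2) := by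
    rw [Real.sqrt_eq_rpow, ← Real.rpow_natCast 2 r, ← Real.rpow_mul (by norm_num)]
    ring_nf
  have h2 : ((2^r : ℕ) : ℝ) = (2:ℝ)^(r:ℝ) := by
    push_cast
    rw [← Real.rpow_natCast 2 r]
  rw [h1, h2, ← Real.rpow_neg (by norm_num), ← Real.rpow_add (by norm_num),
    ← Real.rpow_add (by norm_num)]
  rw [show -((r:ℝ)/2) + ((r:ℝ) + -(r:ℝ)/2) = 0 by ring, Real.rpow_zero]


lemma sq_abs_exp_I_sub_one (φ : ℝ) :
    ‖Complex.exp (↑φ * Complex.I) - 1‖ ^ 2 = 4 * Real.sin (φ/2) ^ 2 := by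
  rw [Complex.sq_norm, Complex.normSq_apply]
  simp only [Complex.sub_re, Complex.sub_im, Complex.exp_ofReal_mul_I_re,
    Complex.exp_ofReal_mul_I_im, Complex.one_re, Complex.one_im]
  have h1 : Real.cos φ = Real.cos (φ/2) ^ 2 - Real.sin (φ/2) ^ 2 := by
    rw [← Real.cos_two_mul']; ring_nf
  have h2 := Real.sin_sq_add_cos_sq (φ/2)
  have h3 := Real.sin_sq_add_cos_sq φ
  nlinarith [h1, h2, h3]

lemma zpow_eq (r : ℕ) (ω : ℤ) (t : ℕ) :
    Complex.exp (2 * Real.pi * Complex.I * (ω : ℂ) * (t : ℂ) / (2^r : ℂ)) =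
      Complex.exp (((2 * Real.pi * ω / 2^r : ℝ) : ℂ) * Complex.I) ^ t := by
  rw [← Complex.exp_nat_mul]
  congr 1
  push_cast
  ring

lemma z_ne_one (r : ℕ) (ω : ℤ) (hω : ω ≠ 0) (hωr : |ω| < 2^r) :
    Complex.exp (((2 * Real.pi * ω / 2^r : ℝ) : ℂ) * Complex.I) ≠ 1 := by
  rw [Ne, Complex.exp_eq_one_iff]
  rintro ⟨k, hk⟩
  have hI : Complex.I ≠ 0 := Complex.I_ne_zero
  have h1 : ((2 * Real.pi * ω / 2^r : ℝ) : ℂ) = ((k * (2 * Real.pi) : ℝ) : ℂ) := by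
    apply mul_right_cancel₀ hI
    rw [hk]; push_cast; ring
  have h2 : (2 * Real.pi * ω / 2^r : ℝ) = k * (2 * Real.pi) := by exact_mod_cast h1
  have h2r : ((2:ℝ)^r) ≠ 0 := by positivity
  have h3 : (ω : ℝ) = k * 2^r := by
    have e : 2 * Real.pi * (ω:ℝ) = k * (2 * Real.pi) * 2^r := by
      have := congrArg (· * (2:ℝ)^r) h2
      simpa [div_mul_cancel₀, h2r] using this
    exact mul_left_cancel₀ (ne_of_gt (by positivity : (0:ℝ) < 2*Real.pi))
      (by linear_combination e)
  have hk'' : ω = k * 2^r := by exact_mod_cast h3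
  have hk0 : k ≠ 0 := by rintro rfl; simp at hk''; exact hω hk''
  have h4 : (2:ℤ)^r ≤ |ω| := by
    have h5 : |(2:ℤ)^r| = 2^r := abs_of_nonneg (by positivity)
    rw [hk'', abs_mul, h5]
    have h6 : 0 < |k| := abs_pos.mpr hk0
    have h7 : 1 ≤ |k| := by omega
    nlinarith [pow_pos (by norm_num : (0:ℤ) < 2) r]
  omega

lemma haarPhi_mul_sum (r l p : ℕ) (g : ℕ → ℂ) (hl : l ≤ r-1) (hr : 1 ≤ r) (hp : p < 2^l) :
    ∑ t : Fin (2^r), haarPhi r l p t * g (t:ℕ) =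
      (((2:ℝ) ^ (((l:ℝ)-r)/2) : ℝ):ℂ) *
        ((∑ t ∈ Finset.Ico (p*2^(r-l)) (p*2^(r-l)+2^(r-l-1)), g t)
         - ∑ t ∈ Finset.Ico (p*2^(r-l)+2^(r-l-1)) (p*2^(r-l)+2^(r-l)), g t) := by
  have hrl : r - l = (r-l-1)+1 := by omega
  have hm : 2^(r-l) = 2 * 2^(r-l-1) := by rw [hrl, pow_succ]; exact (Nat.mul_comm _ _)
  set c : ℝ := (2:ℝ) ^ (((l:ℝ)-r)/2) with hc
  set a := p * 2^(r-l) with ha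
  set h := 2^(r-l-1) with hh
  have hfit : a + 2*h ≤ 2^r := by
    have : (p+1) * 2^(r-l) ≤ 2^l * 2^(r-l) := by
      exact Nat.mul_le_mul_right _ hp
    rw [← pow_add] at this
    have hlr : l + (r-l) = r := by omega
    rw [hlr] at this
    calc a + 2*h = (p+1) * 2^(r-l) := by rw [ha, hm]; ring
    _ ≤ 2^r := this
  have hstep : ∑ t : Fin (2^r), haarPhi r l p t * g (t:ℕ) =
      ∑ t ∈ Finset.range (2^r), (if a ≤ t ∧ t < a + h then (c:ℂ)
        else if a + h ≤ t ∧ t < a + 2*h then -(c:ℂ) else 0) * g t := by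
    rw [← Fin.sum_univ_eq_sum_range (fun t => (if a ≤ t ∧ t < a + h then (c:ℂ)
        else if a + h ≤ t ∧ t < a + 2*h then -(c:ℂ) else 0) * g t)]
    apply Finset.sum_congr rfl
    intro t _
    congr 1
    unfold haarPhi
    have e1 : p * 2^(r-l) + 2^(r-l-1) = a + h := rfl
    have e2 : (p+1) * 2^(r-l) = a + 2*h := by rw [ha, hh, hm]; ring
    rw [e1, e2]
  rw [hstep]
  rw [← Finset.sum_subset (s₁ := Finset.Ico a (a + 2*h)) (s₂ := Finset.range (2^r))
    (by intro x hx; rw [Finset.mem_range]; rw [Finset.mem_Ico] at hx; omega)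
    (by intro x _ hx; rw [Finset.mem_Ico] at hx
        rw [if_neg (by omega), if_neg (by omega), zero_mul])]
  rw [← Finset.sum_Ico_consecutive _ (by omega : a ≤ a + h) (by omega : a + h ≤ a + 2*h)]
  have e1 : ∑ t ∈ Finset.Ico a (a+h), (if a ≤ t ∧ t < a + h then (c:ℂ)
        else if a + h ≤ t ∧ t < a + 2*h then -(c:ℂ) else 0) * g t
      = (c:ℂ) * ∑ t ∈ Finset.Ico a (a+h), g t := by
    rw [Finset.mul_sum]
    apply Finset.sum_congr rfl
    intro t ht; rw [Finset.mem_Ico] at ht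
    rw [if_pos (by omega)]
  have e2 : ∑ t ∈ Finset.Ico (a+h) (a+2*h), (if a ≤ t ∧ t < a + h then (c:ℂ)
        else if a + h ≤ t ∧ t < a + 2*h then -(c:ℂ) else 0) * g t
      = -((c:ℂ) * ∑ t ∈ Finset.Ico (a+h) (a+2*h), g t) := by
    rw [Finset.mul_sum, ← Finset.sum_neg_distrib]
    apply Finset.sum_congr rfl
    intro t ht; rw [Finset.mem_Ico] at ht
    rw [if_neg (by omega), if_pos (by omega)]; ring
  rw [e1, e2]
  have : a + 2*h = a + 2^(r-l) := by rw [hm]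
  rw [this] at *
  ring_nf

lemma haarPhi_exp_sum (r l p : ℕ) (ω : ℤ) (hl : l ≤ r-1) (hr : 1 ≤ r) (hp : p < 2^l) :
    ∑ t : Fin (2^r), haarPhi r l p t *
        Complex.exp (2 * Real.pi * Complex.I * (ω : ℂ) * ((t:ℕ) : ℂ) / (2^r : ℂ)) =
      (((2:ℝ) ^ (((l:ℝ)-r)/2) : ℝ):ℂ) *
        ((∑ t ∈ Finset.Ico (p*2^(r-l)) (p*2^(r-l)+2^(r-l-1)),
            Complex.exp (((2 * Real.pi * ω / 2^r : ℝ) : ℂ) * Complex.I) ^ t)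
         - ∑ t ∈ Finset.Ico (p*2^(r-l)+2^(r-l-1)) (p*2^(r-l)+2^(r-l)),
            Complex.exp (((2 * Real.pi * ω / 2^r : ℝ) : ℂ) * Complex.I) ^ t) := by
  rw [show (∑ t : Fin (2^r), haarPhi r l p t *
        Complex.exp (2 * Real.pi * Complex.I * (ω : ℂ) * ((t:ℕ) : ℂ) / (2^r : ℂ)))
      = ∑ t : Fin (2^r), haarPhi r l p t *
        Complex.exp (((2 * Real.pi * ω / 2^r : ℝ) : ℂ) * Complex.I) ^ (t:ℕ) from
    Finset.sum_congr rfl (fun t _ => by rw [zpow_eq])]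
  exact haarPhi_mul_sum r l p
    (fun t => Complex.exp (((2 * Real.pi * ω / 2^r : ℝ) : ℂ) * Complex.I) ^ t) hl hr hp

lemma dft_phi_zero (r l p : ℕ) (hl : l ≤ r-1) (hr : 1 ≤ r) (hp : p < 2^l) :
    dft r (haarPhi r l p) 0 = 0 := by
  unfold dft
  rw [haarPhi_exp_sum r l p 0 hl hr hp]
  have h0 : ((2 * Real.pi * ((0:ℤ):ℝ) / 2^r : ℝ) : ℂ) * Complex.I = 0 := by
    push_cast; ring
  rw [h0, Complex.exp_zero]
  simp only [one_pow, Finset.sum_const, Nat.card_Ico, nsmul_eq_mul, mul_one]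
  have : p * 2^(r-l) + 2^(r-l) - (p * 2^(r-l) + 2^(r-l-1))
      = p * 2^(r-l) + 2^(r-l-1) - p * 2^(r-l) := by
    have : 2^(r-l) = 2 * 2^(r-l-1) := by
      rw [show r - l = (r-l-1)+1 by omega, pow_succ]; exact (Nat.mul_comm _ _)
    omega
  rw [this]
  ring


lemma abs_dft_phi_sq_le (r l p : ℕ) (ω : ℤ) (hl : l ≤ r-1) (hr : 1 ≤ r) (hp : p < 2^l)
    (hω : ω ≠ 0) (hωr : 2 * |ω| ≤ 2^r) :
    ‖dft r (haarPhi r l p) ω‖^2 ≤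
      2^l * min 1 ((Real.pi * |(ω:ℝ)| / 2^(l+1))^4) / (ω:ℝ)^2 := by
  have hωlt : |ω| < 2^r := by
    have : (0:ℤ) < 2^r := by positivity
    omega
  set θ : ℝ := 2 * Real.pi * ω / 2^r with hθ
  set z : ℂ := Complex.exp ((θ : ℂ) * Complex.I) with hzdef
  have hz1 : z ≠ 1 := z_ne_one r ω hω hωlt
  have hz0 : z - 1 ≠ 0 := sub_ne_zero.mpr hz1
  set a := p * 2^(r-l) with ha
  set h := 2^(r-l-1) with hh
  have hm : 2^(r-l) = 2 * 2^(r-l-1) := by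
    rw [show r - l = (r-l-1)+1 by omega, pow_succ]; exact (Nat.mul_comm _ _)
  -- the inner sum
  have hsum : dft r (haarPhi r l p) ω = (Real.sqrt (2^r) : ℂ)⁻¹ *
      ((((2:ℝ) ^ (((l:ℝ)-r)/2) : ℝ):ℂ) * (-(z^a * (z^h - 1)^2 / (z - 1)))) := by
    unfold dft
    rw [haarPhi_exp_sum r l p ω hl hr hp]
    congr 2
    rw [geom_sum_Ico hz1 (by omega : a ≤ a + h),
        geom_sum_Ico hz1 (by omega : a + h ≤ a + 2^(r-l))]
    rw [show a + 2^(r-l) = (a + h) + h by omega, pow_add, pow_add]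
    field_simp
    ring
  -- absolute value
  have habsz : ‖z‖ = 1 := Complex.norm_exp_ofReal_mul_I θ
  have hzh : z^h = Complex.exp ((((h:ℝ) * θ : ℝ) : ℂ) * Complex.I) := by
    rw [hzdef, ← Complex.exp_nat_mul]
    congr 1
    push_cast
    ring
  have habs2 : ‖dft r (haarPhi r l p) ω‖^2 =
      ((Real.sqrt (2^r))⁻¹)^2 * ((2:ℝ) ^ (((l:ℝ)-r)/2))^2 *
        (‖z^h - 1‖^2)^2 / (‖z - 1‖)^2 := by
    rw [hsum]
    rw [norm_mul, norm_mul, norm_neg, norm_div, norm_mul, norm_pow, norm_pow,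
        norm_inv, habsz, one_pow, one_mul, Complex.norm_real, Complex.norm_real,
        Real.norm_eq_abs, Real.norm_eq_abs]
    rw [_root_.abs_of_nonneg (Real.sqrt_nonneg _),
        _root_.abs_of_nonneg (by positivity : (0:ℝ) ≤ (2:ℝ) ^ (((l:ℝ)-r)/2))]
    ring
  rw [habs2, hzh, sq_abs_exp_I_sub_one, sq_abs_exp_I_sub_one]
  -- numeric simplifications
  have hsq : ((Real.sqrt (2^r))⁻¹)^2 = ((2:ℝ)^r)⁻¹ := by
    rw [inv_pow, Real.sq_sqrt (by positivity)]
  have hc2 : ((2:ℝ) ^ (((l:ℝ)-r)/2))^2 = 2^l / 2^r := by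
    rw [← Real.rpow_natCast ((2:ℝ) ^ (((l:ℝ)-r)/2)) 2, ← Real.rpow_mul (by norm_num)]
    rw [show ((l:ℝ)-r)/2 * (2:ℕ) = (l:ℝ) - r by push_cast; ring]
    rw [Real.rpow_sub (by norm_num), Real.rpow_natCast, Real.rpow_natCast]
  rw [hsq, hc2]
  -- the two angles
  have hpw : (2:ℝ)^(r-l-1) * (2:ℝ)^(l+1) = 2^r := by
    rw [← pow_add]; congr 1; omega
  have h2l : (0:ℝ) < 2^(l+1) := by positivity
  have h2r : (0:ℝ) < 2^r := by positivity
  have hα : (h:ℝ) * θ / 2 = Real.pi * ω / 2^(l+1) := by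
    rw [hθ, hh]
    push_cast
    field_simp
    linear_combination hpw
  have hβ : θ / 2 = Real.pi * ω / 2^r := by rw [hθ]; ring
  rw [hα, hβ]
  set x : ℝ := |(ω:ℝ)| with hx
  have hx0 : 0 < x := by
    rw [hx]; simp only [abs_pos, ne_eq, Int.cast_eq_zero]; exact hω
  set M : ℝ := min 1 ((Real.pi * x / 2^(l+1))^4) with hM
  have hM0 : 0 ≤ M := le_min (by norm_num) (by positivity)
  -- sin bounds
  have hs1 : Real.sin (Real.pi * ω / 2^(l+1)) ^ 4 ≤ M := by
    apply le_min
    · nlinarith [Real.sin_sq_le_one (Real.pi * ω / 2^(l+1)), sq_nonneg (Real.sin (Real.pi * ω / 2^(l+1)))]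
    · have habs : |Real.pi * (ω:ℝ) / 2^(l+1)| = Real.pi * x / 2^(l+1) := by
        rw [abs_div, abs_mul, _root_.abs_of_nonneg Real.pi_pos.le,
          _root_.abs_of_nonneg h2l.le, hx]
      have h1 : |Real.sin (Real.pi * ω / 2^(l+1))| ≤ Real.pi * x / 2^(l+1) := by
        rw [← habs]; exact Real.abs_sin_le_abs
      calc Real.sin (Real.pi * ω / 2^(l+1)) ^ 4
          = |Real.sin (Real.pi * ω / 2^(l+1))|^4 := by
            rw [pow_abs, _root_.abs_of_nonneg (by positivity)]
        _ ≤ (Real.pi * x / 2^(l+1))^4 := by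
            apply pow_le_pow_left₀ (abs_nonneg _) h1
  have hs2 : (2 * x / 2^r)^2 ≤ Real.sin (Real.pi * ω / 2^r)^2 := by
    have habs : |Real.pi * (ω:ℝ) / 2^r| = Real.pi * x / 2^r := by
      rw [abs_div, abs_mul, _root_.abs_of_nonneg Real.pi_pos.le,
        _root_.abs_of_nonneg h2r.le, hx]
    have harg : |Real.pi * (ω:ℝ) / 2^r| ≤ Real.pi / 2 := by
      rw [habs]
      rw [div_le_div_iff₀ h2r (by norm_num)]
      have h2x : 2 * x ≤ 2^r := by
        have hcast : ((2 * |ω| : ℤ) : ℝ) ≤ (((2:ℤ)^r : ℤ) : ℝ) := by exact_mod_cast hωr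
        push_cast at hcast
        rw [hx]; exact hcast
      nlinarith [Real.pi_pos]
    have hjord := Real.mul_abs_le_abs_sin harg
    rw [habs] at hjord
    have heq : 2 / Real.pi * (Real.pi * x / 2^r) = 2 * x / 2^r := by
      field_simp
    rw [heq] at hjord
    calc (2 * x / 2^r)^2 ≤ |Real.sin (Real.pi * ω / 2^r)|^2 := by
          apply pow_le_pow_left₀ (by positivity) hjord
      _ = Real.sin (Real.pi * ω / 2^r)^2 := by rw [pow_abs, _root_.abs_of_nonneg (by positivity)]
  -- final computation
  have hs2pos : 0 < Real.sin (Real.pi * ω / 2^r)^2 := lt_of_lt_of_le (by positivity) hs2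
  calc ((2:ℝ)^r)⁻¹ * (2^l / 2^r) * (4 * Real.sin (Real.pi * ω / 2^(l+1))^2)^2
        / (4 * Real.sin (Real.pi * ω / 2^r)^2)
      = (2^l * Real.sin (Real.pi * ω / 2^(l+1)) ^ 4) *
        (4 / (((2:ℝ)^r)^2 * Real.sin (Real.pi * ω / 2^r)^2)) := by
        field_simp
    _ ≤ (2^l * M) * (4 / (((2:ℝ)^r)^2 * (2 * x / 2^r)^2)) := by
        apply mul_le_mul
        · apply mul_le_mul_of_nonneg_left hs1 (by positivity)
        · apply div_le_div_of_nonneg_left (by norm_num) (by positivity)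
          apply mul_le_mul_of_nonneg_left hs2 (by positivity)
        · positivity
        · positivity
    _ = 2^l * M / (ω:ℝ)^2 := by
        have hxsq : x^2 = (ω:ℝ)^2 := by rw [hx, _root_.sq_abs]
        rw [← hxsq]
        field_simp
        ring

section PsiZero
lemma dft_psi_eq_zero (r : ℕ) (ω : ℤ) (hω : ω ≠ 0) (hωr : |ω| < 2^r) :
    dft r (haarPsi r) ω = 0 := by
  unfold dft haarPsi
  set z := Complex.exp (((2 * Real.pi * ω / 2^r : ℝ) : ℂ) * Complex.I) with hz
  have hsum : ∑ t : Fin (2^r), (((2:ℝ) ^ (-(r:ℝ)/2) : ℝ) : ℂ) *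
      Complex.exp (2 * Real.pi * Complex.I * (ω : ℂ) * ((t:ℕ) : ℂ) / (2^r : ℂ))
      = (((2:ℝ) ^ (-(r:ℝ)/2) : ℝ) : ℂ) * ∑ t ∈ Finset.range (2^r), z ^ t := by
    rw [Finset.mul_sum, ← Fin.sum_univ_eq_sum_range (fun t => (((2:ℝ) ^ (-(r:ℝ)/2) : ℝ) : ℂ) * z ^ t)]
    exact Finset.sum_congr rfl (fun t _ => by rw [zpow_eq])
  rw [hsum]
  have hzn : z ^ (2^r) = 1 := by
    rw [hz, ← Complex.exp_nat_mul]
    have : ((2^r : ℕ) : ℂ) * (((2 * Real.pi * ω / 2^r : ℝ) : ℂ) * Complex.I)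
        = (ω : ℂ) * (2 * Real.pi * Complex.I) := by
      have h2r : ((2:ℂ)^r) ≠ 0 := pow_ne_zero _ two_ne_zero
      push_cast
      field_simp
    rw [this]
    exact_mod_cast Complex.exp_int_mul_two_pi_mul_I ω
  have hgeom : ∑ t ∈ Finset.range (2^r), z ^ t = 0 := by
    have hz1 := z_ne_one r ω hω hωr
    rw [geom_sum_eq hz1, hzn]
    simp
  rw [hgeom]
  ring
end PsiZero

lemma bandW_cases {j : ℕ} {ω : ℤ} (hω : ω ∈ bandW j) :
    (ω = 0 ∧ j = 0) ∨ ((2:ℤ)^j ≤ 2 * |ω| ∧ |ω| ≤ 2^j) := by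
  unfold bandW at hω
  split at hω
  · subst ‹j = 0›
    simp only [Finset.mem_insert, Finset.mem_singleton] at hω
    rcases hω with rfl | rfl
    · exact Or.inl ⟨rfl, rfl⟩
    · right; norm_num
  · right
    have hj : j ≠ 0 := ‹j ≠ 0›
    obtain ⟨k, rfl⟩ : ∃ k, j = k + 1 := ⟨j-1, by omega⟩
    simp only [Nat.add_sub_cancel] at hω ⊢
    have hpw : (2:ℤ)^(k+1) = 2 * 2^k := by rw [pow_succ]; ring
    have hp1 : (0:ℤ) < 2^k := by positivity
    rw [Finset.mem_union, Finset.mem_Icc, Finset.mem_Icc] at hω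
    rcases hω with ⟨h1, h2⟩ | ⟨h1, h2⟩
    · constructor
      · rw [_root_.abs_of_nonpos (by omega)]; omega
      · rw [_root_.abs_of_nonpos (by omega)]; omega
    · constructor
      · rw [_root_.abs_of_nonneg (by omega)]; omega
      · rw [_root_.abs_of_nonneg (by omega)]; omega

lemma final_bound (j l : ℕ) (x : ℝ) (hx0 : 0 < x) (h1 : (2:ℝ)^j ≤ 2*x) (h2 : x ≤ 2^j) :
    2^l * min 1 ((Real.pi * x / 2^(l+1))^4) / x^2 ≤
      (Real.pi^4/16) * (2:ℝ)^(-(j:ℝ)) * (2:ℝ)^(-|(j:ℝ)-(l:ℝ)|) := by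
  have hπ3 : (3:ℝ) < Real.pi := Real.pi_gt_three
  have hπsq : (9:ℝ) < Real.pi^2 := by nlinarith
  have hπ : (64:ℝ) ≤ Real.pi^4 := by nlinarith
  have hπ0 := Real.pi_pos
  rcases le_total l j with hlj | hjl
  · -- l ≤ j : use min ≤ 1
    have habs : |(j:ℝ)-(l:ℝ)| = ((j-l:ℕ):ℝ) := by
      rw [_root_.abs_of_nonneg (by
        have : (l:ℝ) ≤ j := by exact_mod_cast hlj
        linarith)]
      push_cast [Nat.cast_sub hlj]
      ring
    rw [habs, Real.rpow_neg (by norm_num), Real.rpow_neg (by norm_num),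
      Real.rpow_natCast, Real.rpow_natCast]
    have hpw : (2:ℝ)^(j-l) * 2^l = 2^j := by rw [← pow_add]; congr 1; omega
    have hx2 : (2:ℝ)^j * 2^j ≤ 4 * x^2 := by nlinarith [pow_pos (by norm_num : (0:ℝ) < 2) j]
    calc 2^l * min 1 ((Real.pi * x / 2^(l+1))^4) / x^2
        ≤ 2^l * 1 / x^2 := by
          gcongr
          exact min_le_left _ _
      _ ≤ Real.pi^4/16 * ((2:ℝ)^j)⁻¹ * ((2:ℝ)^(j-l))⁻¹ := by
          rw [div_le_iff₀ (by positivity)]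
          have hkey : (4:ℝ) * (2^l * 2^(j-l) * 2^j) ≤ Real.pi^4/16 * (4 * x^2) := by
            nlinarith [pow_pos (by norm_num : (0:ℝ) < 2) l,
              pow_pos (by norm_num : (0:ℝ) < 2) (j-l),
              pow_pos (by norm_num : (0:ℝ) < 2) j,
              mul_le_mul_of_nonneg_left hx2 (by positivity : (0:ℝ) ≤ 2^l)]
          have e : Real.pi^4/16 * ((2:ℝ)^j)⁻¹ * ((2:ℝ)^(j-l))⁻¹ * x^2 * (2^(j-l) * 2^j)
              = Real.pi^4/16 * x^2 := by
            field_simp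
          nlinarith [pow_pos (by norm_num : (0:ℝ) < 2) (j-l),
            pow_pos (by norm_num : (0:ℝ) < 2) j, e, hkey,
            mul_pos (pow_pos (by norm_num : (0:ℝ) < 2) (j-l)) (pow_pos (by norm_num : (0:ℝ) < 2) j)]
  · -- j ≤ l : use min ≤ (πx/2^(l+1))^4
    have habs : |(j:ℝ)-(l:ℝ)| = ((l-j:ℕ):ℝ) := by
      rw [abs_sub_comm, _root_.abs_of_nonneg (by
        have : (j:ℝ) ≤ l := by exact_mod_cast hjl
        linarith)]
      push_cast [Nat.cast_sub hjl]
      ring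
    rw [habs, Real.rpow_neg (by norm_num), Real.rpow_neg (by norm_num),
      Real.rpow_natCast, Real.rpow_natCast]
    have hR : Real.pi^4/16 * ((2:ℝ)^j)⁻¹ * ((2:ℝ)^(l-j))⁻¹ = Real.pi^4/(16 * 2^l) := by
      have hbl : (2:ℝ)^j * 2^(l-j) = 2^l := by rw [← pow_add]; congr 1; omega
      rw [show Real.pi^4/16 * ((2:ℝ)^j)⁻¹ * ((2:ℝ)^(l-j))⁻¹
          = Real.pi^4/(16 * ((2:ℝ)^j * 2^(l-j))) by ring, hbl]
    rw [hR]
    calc 2^l * min 1 ((Real.pi * x / 2^(l+1))^4) / x^2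
        ≤ 2^l * ((Real.pi * x / 2^(l+1))^4) / x^2 := by
          gcongr
          exact min_le_right _ _
      _ = Real.pi^4 * x^2 * 2^l / ((2:ℝ)^(l+1))^4 := by
          field_simp
      _ ≤ Real.pi^4 * ((2:ℝ)^j * 2^j) * 2^l / ((2:ℝ)^(l+1))^4 := by
          gcongr Real.pi^4 * ?_ * 2^l / ((2:ℝ)^(l+1))^4
          nlinarith
      _ ≤ Real.pi^4/(16 * 2^l) := by
          rw [div_le_div_iff₀ (by positivity) (by positivity)]
          have hpows : (2:ℝ)^j * 2^j * 2^l * (16 * 2^l) ≤ ((2:ℝ)^(l+1))^4 := by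
            have e1 : (2:ℝ)^j * 2^j * 2^l * (16 * 2^l) = 2^(j+(j+(l+(4+l)))) := by
              rw [show (16:ℝ) = 2^4 by norm_num, pow_add, pow_add, pow_add, pow_add]
              ring
            have e2 : ((2:ℝ)^(l+1))^4 = 2^((l+1)*4) := by rw [← pow_mul]
            rw [e1, e2]
            exact pow_le_pow_right₀ (by norm_num) (by omega)
          nlinarith [mul_le_mul_of_nonneg_left hpows (by positivity : (0:ℝ) ≤ Real.pi^4)]


/-- For `r ≥ 1` and `0 ≤ j, l ≤ r-1`, the coherence of the Fourier–Haar block satisfies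
`μ(U_{jl}) ≤ (π⁴/16) 2^{-j} 2^{-|j-l|}`. -/
theorem coherence_le (r j l : ℕ) (hr : 1 ≤ r) (hj : j ≤ r - 1) (hl : l ≤ r - 1) :
    coherence r j l ≤ (Real.pi^4 / 16) * (2:ℝ)^(-(j:ℝ)) * (2:ℝ)^(-|(j:ℝ) - (l:ℝ)|) := by
  have hπ3 : (3:ℝ) < Real.pi := Real.pi_gt_three
  have hπsq : (9:ℝ) < Real.pi^2 := by nlinarith
  have hπ : (64:ℝ) ≤ Real.pi^4 := by nlinarith
  unfold coherence
  apply Finset.sup'_le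
  rintro ⟨ω, q⟩ hmem
  rw [Finset.mem_product, Finset.mem_range] at hmem
  obtain ⟨hωmem, hqmem⟩ := hmem
  replace hωmem : ω ∈ bandW j := hωmem
  replace hqmem : q < numCols l := hqmem
  dsimp only
  rcases bandW_cases hωmem with ⟨rfl, rfl⟩ | ⟨hb1, hb2⟩
  · -- ω = 0, j = 0
    unfold Uentry
    by_cases hl0 : l = 0
    · subst hl0
      rw [if_pos rfl]
      by_cases hq0 : q = 0
      · rw [if_pos hq0, abs_dft_psi_zero, one_pow]
        simp only [Nat.cast_zero, neg_zero, Real.rpow_zero, mul_one, zero_sub, abs_neg, abs_zero]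
        nlinarith
      · rw [if_neg hq0, dft_phi_zero r 0 0 (by omega) hr (by norm_num)]
        simp only [norm_zero]
        rw [zero_pow (by norm_num : (2:ℕ) ≠ 0)]
        positivity
    · rw [if_neg hl0, dft_phi_zero r l q hl hr (by
        rw [numCols, if_neg hl0] at hqmem; exact hqmem)]
      simp only [norm_zero]
      rw [zero_pow (by norm_num : (2:ℕ) ≠ 0)]
      positivity
  · -- generic band case
    have h2jpos : (0:ℤ) < 2^j := by positivity
    have hω0 : ω ≠ 0 := by
      rintro rfl
      simp only [abs_zero, mul_zero] at hb1
      exact absurd hb1 (not_le.mpr h2jpos)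
    have hωr : 2 * |ω| ≤ 2^r := by
      have h2 : (2:ℤ) * 2^j ≤ 2^r := by
        rw [← pow_succ']
        exact pow_le_pow_right₀ (by norm_num) (by omega)
      omega
    set x : ℝ := |(ω:ℝ)| with hxdef
    have hx0 : 0 < x := by
      rw [hxdef]; simp only [abs_pos, ne_eq, Int.cast_eq_zero]; exact hω0
    have hx1 : (2:ℝ)^j ≤ 2*x := by
      have : (((2:ℤ)^j : ℤ) : ℝ) ≤ ((2 * |ω| : ℤ) : ℝ) := by exact_mod_cast hb1
      push_cast at this
      rw [hxdef]; exact this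
    have hx2 : x ≤ 2^j := by
      have : ((|ω| : ℤ) : ℝ) ≤ (((2:ℤ)^j : ℤ) : ℝ) := by exact_mod_cast hb2
      push_cast at this
      rw [hxdef]; exact this
    have hfin := final_bound j l x hx0 hx1 hx2
    rw [show x^2 = ((ω:ℝ))^2 from by rw [hxdef, _root_.sq_abs]] at hfin
    unfold Uentry
    by_cases hl0 : l = 0
    · subst hl0
      rw [if_pos rfl]
      by_cases hq0 : q = 0
      · rw [if_pos hq0, dft_psi_eq_zero r ω hω0 (by omega)]
        simp only [norm_zero]
        rw [zero_pow (by norm_num : (2:ℕ) ≠ 0)]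
        positivity
      · rw [if_neg hq0]
        refine le_trans ?_ hfin
        exact abs_dft_phi_sq_le r 0 0 ω (by omega) hr (by norm_num) hω0 hωr
    · rw [if_neg hl0]
      refine le_trans ?_ hfin
      exact abs_dft_phi_sq_le r l q ω hl hr (by
        rw [numCols, if_neg hl0] at hqmem; exact hqmem) hω0 hωr
end

section
/- Let r ∈ ℕ, r ≥ 1, n = 2^r. For all 0 ≤ j, l ≤ r−1, the local coherence of the Fourier–Haar matrix satisfies μ(j,l) ≤ (π⁴/16) · 2^{−j} · 2^{−|j−l|/2}. -/
/-! ### Auxiliary lemmas -/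

noncomputable def xw (r : ℕ) (ω : ℤ) : ℂ :=
  Complex.exp (((2 * Real.pi * (ω:ℝ) / 2^r : ℝ)) * Complex.I)

lemma aux_exp_eq (r : ℕ) (ω : ℤ) (t : ℕ) :
    Complex.exp (2 * (Real.pi:ℂ) * Complex.I * (ω : ℂ) * ((t : ℕ) : ℂ) / (2^r : ℂ)) = xw r ω ^ t := by
  rw [xw, ← Complex.exp_nat_mul]
  congr 1
  push_cast
  ring

lemma aux_abs_xw (r : ℕ) (ω : ℤ) : ‖xw r ω‖ = 1 :=
  Complex.norm_exp_ofReal_mul_I _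

lemma aux_abs_exp_sub_one (θ : ℝ) :
    ‖Complex.exp (θ*Complex.I) - 1‖ = 2*|Real.sin (θ/2)| := by
  have h : Complex.exp (θ*Complex.I) - 1 = Complex.mk (Real.cos θ - 1) (Real.sin θ) := by
    rw [Complex.exp_mul_I]
    apply Complex.ext <;> simp [Complex.cos_ofReal_re, Complex.sin_ofReal_re]
  rw [h, Complex.norm_def, Complex.normSq_mk]
  have h2 : (Real.cos θ - 1) * (Real.cos θ - 1) + Real.sin θ * Real.sin θ = 2 - 2 * Real.cos θ := by
    have := Real.sin_sq_add_cos_sq θ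
    nlinarith
  rw [h2, Real.abs_sin_half]
  rw [show (2:ℝ) - 2*Real.cos θ = 4 * ((1 - Real.cos θ)/2) by ring, show (4:ℝ) = 2^2 by norm_num,
    Real.sqrt_mul (by positivity), Real.sqrt_sq (by norm_num)]

lemma aux_abs_xw_sub_one (r : ℕ) (ω : ℤ) :
    ‖xw r ω - 1‖ = 2 * |Real.sin (Real.pi * ω / 2^r)| := by
  rw [xw, aux_abs_exp_sub_one]
  norm_num
  ring_nf

lemma aux_xw_lb (r : ℕ) (ω : ℤ) (hub : |(ω:ℝ)| ≤ 2^r / 2) :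
    4 * |(ω:ℝ)| / 2^r ≤ ‖xw r ω - 1‖ := by
  rw [aux_abs_xw_sub_one]
  set y := Real.pi * ω / 2^r with hy
  have h2r : (0:ℝ) < 2^r := by positivity
  have hay : |y| = Real.pi * |(ω:ℝ)| / 2^r := by
    rw [hy, abs_div, abs_mul, abs_of_pos Real.pi_pos, abs_of_pos h2r]
  have hle : |y| ≤ Real.pi / 2 := by
    rw [hay]
    rw [div_le_div_iff₀ h2r (by norm_num)]
    calc Real.pi * |(ω:ℝ)| * 2 ≤ Real.pi * (2^r/2) * 2 := by
          gcongr
      _ = Real.pi * 2^r := by ring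
  have hsin : 2 / Real.pi * |y| ≤ Real.sin |y| :=
    Real.mul_le_sin (abs_nonneg _) hle
  have hsin2 : Real.sin |y| ≤ |Real.sin y| := by
    rcases abs_cases y with ⟨h1, _⟩ | ⟨h1, _⟩
    · rw [h1]; exact le_abs_self _
    · rw [h1, Real.sin_neg]; exact neg_le_abs _
  have heq : 2 / Real.pi * |y| = 2 * |(ω:ℝ)| / 2^r := by
    rw [hay]
    field_simp
  have h3 : 2 * |(ω:ℝ)| / 2^r ≤ |Real.sin y| := heq ▸ (hsin.trans hsin2)
  calc 4 * |(ω:ℝ)| / 2^r = 2 * (2 * |(ω:ℝ)| / 2^r) := by ring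
    _ ≤ 2 * |Real.sin y| := by linarith

lemma aux_xw_ne_one (r : ℕ) (ω : ℤ) (hne : ω ≠ 0) (hub : |(ω:ℝ)| ≤ 2^r / 2) :
    xw r ω ≠ 1 := by
  intro h
  have h0 : ‖xw r ω - 1‖ = 0 := by rw [h, sub_self, norm_zero]
  have hpos : (0:ℝ) < 4 * |(ω:ℝ)| / 2^r := by
    have : (ω:ℝ) ≠ 0 := Int.cast_ne_zero.mpr hne
    have := abs_pos.mpr this
    positivity
  linarith [aux_xw_lb r ω hub]

lemma aux_band_ub {j : ℕ} {ω : ℤ} (h : ω ∈ bandW j) : |ω| ≤ 2^j := by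
  unfold bandW at h
  split_ifs at h with hj
  · simp only [Finset.mem_insert, Finset.mem_singleton] at h
    subst hj
    rcases h with h | h <;> simp [h]
  · simp only [Finset.mem_union, Finset.mem_Icc] at h
    have h1 : (1:ℤ) ≤ 2^(j-1) := one_le_pow₀ (by norm_num)
    have h2 : (2:ℤ)^(j-1) + (2:ℤ)^(j-1) = 2^j := by
      rw [← two_mul, ← pow_succ']
      congr 1
      omega
    rw [abs_le]
    omega

lemma aux_band_lb {j : ℕ} {ω : ℤ} (h : ω ∈ bandW j) (hne : ω ≠ 0) : 2^j ≤ 2 * |ω| := by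
  unfold bandW at h
  split_ifs at h with hj
  · simp only [Finset.mem_insert, Finset.mem_singleton] at h
    subst hj
    rcases h with h | h
    · exact absurd h hne
    · simp [h]
  · simp only [Finset.mem_union, Finset.mem_Icc] at h
    have h1 : (1:ℤ) ≤ 2^(j-1) := one_le_pow₀ (by norm_num)
    have h2 : (2:ℤ)^(j-1) + (2:ℤ)^(j-1) = 2^j := by
      rw [← two_mul, ← pow_succ']
      congr 1
      omega
    rcases abs_cases ω with ⟨ha, _⟩ | ⟨ha, _⟩ <;> omega

lemma aux_band_ne {j : ℕ} {ω : ℤ} (hj : j ≠ 0) (h : ω ∈ bandW j) : ω ≠ 0 := by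
  unfold bandW at h
  rw [if_neg hj] at h
  simp only [Finset.mem_union, Finset.mem_Icc] at h
  have h1 : (1:ℤ) ≤ 2^(j-1) := one_le_pow₀ (by norm_num)
  omega

lemma aux_band_ub_real {r j : ℕ} {ω : ℤ} (hr : 1 ≤ r) (hj : j ≤ r - 1) (h : ω ∈ bandW j) :
    |(ω:ℝ)| ≤ 2^r / 2 := by
  have h1 : |ω| ≤ 2^j := aux_band_ub h
  have h2 : ((|ω|:ℤ):ℝ) ≤ (((2:ℤ)^j : ℤ):ℝ) := by exact_mod_cast h1
  push_cast at h2
  have h3 : (2:ℝ)^j ≤ 2^(r-1) := by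
    apply pow_le_pow_right₀ (by norm_num) hj
  have h4 : (2:ℝ)^(r-1) = 2^r / 2 := by
    rw [eq_div_iff (by norm_num), ← pow_succ]
    congr 1
    omega
  calc |(ω:ℝ)| ≤ (2:ℝ)^j := h2
    _ ≤ 2^(r-1) := h3
    _ = 2^r/2 := h4

lemma aux_xw_pow (r : ℕ) (ω : ℤ) : xw r ω ^ (2^r) = 1 := by
  rw [xw, ← Complex.exp_nat_mul]
  rw [show ((2^r : ℕ) : ℂ) * (((2 * Real.pi * (ω:ℝ) / 2^r : ℝ)) * Complex.I) = ω * (2 * Real.pi * Complex.I) by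
    have h : ((2:ℂ)^r) ≠ 0 := by
      apply pow_ne_zero
      norm_num
    push_cast
    field_simp]
  exact Complex.exp_int_mul_two_pi_mul_I ω

lemma aux_dft_psi (r : ℕ) (ω : ℤ) (hx : xw r ω ≠ 1) : dft r (haarPsi r) ω = 0 := by
  unfold dft haarPsi
  simp only [aux_exp_eq]
  rw [← Finset.mul_sum, Fin.sum_univ_eq_sum_range (fun t => xw r ω ^ t) (2^r),
    geom_sum_eq hx, aux_xw_pow]
  simp

lemma aux_sqrt_pow (r : ℕ) : Real.sqrt ((2:ℝ)^r) = (2:ℝ)^((r:ℝ)/2) := by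
  rw [show ((2:ℝ)^r) = (2:ℝ)^((r:ℕ):ℝ) from (Real.rpow_natCast 2 r).symm,
    Real.sqrt_eq_rpow, ← Real.rpow_mul (by norm_num)]
  congr 1
  ring

lemma aux_dft_psi_zero (r : ℕ) : ‖dft r (haarPsi r) 0‖ ≤ 1 := by
  unfold dft haarPsi
  simp only [Int.cast_zero, mul_zero, zero_mul, zero_div, Complex.exp_zero, mul_one]
  rw [Finset.sum_const, Finset.card_univ, Fintype.card_fin, nsmul_eq_mul,
    norm_mul, norm_mul, norm_inv, Complex.norm_real, Real.norm_eq_abs, Complex.norm_real, Real.norm_eq_abs, Complex.norm_natCast,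
    abs_of_nonneg (Real.sqrt_nonneg _), aux_sqrt_pow,
    abs_of_nonneg (Real.rpow_nonneg (by norm_num : (0:ℝ) ≤ 2) _)]
  have h : ((2^r : ℕ) : ℝ) = (2:ℝ)^((r:ℕ):ℝ) := by
    rw [Real.rpow_natCast]
    push_cast
    ring
  rw [h, ← Real.rpow_neg_one ((2:ℝ)^((r:ℝ)/2)), ← Real.rpow_mul (by norm_num),
    ← Real.rpow_add (by norm_num), ← Real.rpow_add (by norm_num)]
  rw [show (r:ℝ)/2 * (-1) + (((r:ℕ):ℝ) + -(r:ℝ)/2) = 0 by ring, Real.rpow_zero]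

lemma aux_abs_dft_le (r : ℕ) (x : Fin (2^r) → ℂ) (ω : ℤ) :
    ‖dft r x ω‖ ≤ (2:ℝ)^(-(r:ℝ)/2) * ∑ t : Fin (2^r), ‖x t‖ := by
  unfold dft
  rw [norm_mul, norm_inv, Complex.norm_real, Real.norm_eq_abs, abs_of_nonneg (Real.sqrt_nonneg _),
    aux_sqrt_pow, ← Real.rpow_neg_one ((2:ℝ)^((r:ℝ)/2)), ← Real.rpow_mul (by norm_num)]
  rw [show (r:ℝ)/2 * (-1) = -(r:ℝ)/2 by ring]
  refine mul_le_mul_of_nonneg_left ?_ (Real.rpow_nonneg (by norm_num) _)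
  refine (norm_sum_le _ _).trans ?_
  apply Finset.sum_le_sum
  intro t _
  rw [norm_mul, aux_exp_eq, norm_pow, aux_abs_xw, one_pow, mul_one]

lemma aux_phi_trivial (r l p : ℕ) (hl : l < r) (ω : ℤ) :
    ‖dft r (haarPhi r l p) ω‖ ≤ (2:ℝ)^(-(l:ℝ)/2) := by
  set c : ℝ := (2:ℝ)^(((l:ℝ)-r)/2) with hcdef
  have hc : 0 ≤ c := Real.rpow_nonneg (by norm_num) _
  set a := p * 2^(r-l) with hadef
  have hstep : ∑ t : Fin (2^r), ‖haarPhi r l p t‖ ≤ ((2^(r-l) : ℕ) : ℝ) * c := by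
    have hb : ∀ t : Fin (2^r), ‖haarPhi r l p t‖ ≤
        (if a ≤ (t:ℕ) ∧ (t:ℕ) < a + 2^(r-l) then c else 0) := by
      intro t
      unfold haarPhi
      have hhalf : (2:ℕ)^(r-l-1) ≤ 2^(r-l) := Nat.pow_le_pow_right (by norm_num) (by omega)
      have hg : 1 ≤ (2:ℕ)^(r-l-1) := Nat.one_le_two_pow
      rw [show (p+1) * 2^(r-l) = p * 2^(r-l) + 2^(r-l) by ring, ← hadef]
      split_ifs <;>
        simp only [norm_neg, Complex.norm_real, Real.norm_eq_abs, abs_of_nonneg hc, norm_zero, ← hcdef] <;>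
        first
          | exact le_refl _
          | exact hc
          | (exfalso; omega)
    refine (Finset.sum_le_sum (fun t _ => hb t)).trans ?_
    rw [Fin.sum_univ_eq_sum_range
      (fun t => if a ≤ t ∧ t < a + 2^(r-l) then c else 0) (2^r)]
    rw [← Finset.sum_filter]
    rw [Finset.sum_const, nsmul_eq_mul]
    have hsub : (Finset.range (2^r)).filter (fun t => a ≤ t ∧ t < a + 2^(r-l)) ⊆
        Finset.Ico a (a + 2^(r-l)) := by
      intro t ht
      simp only [Finset.mem_filter, Finset.mem_range] at ht
      rw [Finset.mem_Ico]
      exact ht.2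
    have hcard := Finset.card_le_card hsub
    rw [Nat.card_Ico] at hcard
    have hf : 1 ≤ (2:ℕ)^(r-l) := Nat.one_le_two_pow
    have hcard' : ((Finset.range (2^r)).filter (fun t => a ≤ t ∧ t < a + 2^(r-l))).card ≤ 2^(r-l) := by
      omega
    exact mul_le_mul_of_nonneg_right (by exact_mod_cast hcard') hc
  have harith : (2:ℝ)^(-(r:ℝ)/2) * (((2^(r-l):ℕ):ℝ) * c) = (2:ℝ)^(-(l:ℝ)/2) := by
    rw [hcdef, Nat.cast_pow, Nat.cast_ofNat,
      show ((2:ℝ)^(r-l:ℕ)) = (2:ℝ)^(((r-l:ℕ)):ℝ) from (Real.rpow_natCast _ _).symm,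
      Nat.cast_sub hl.le, ← Real.rpow_add (by norm_num), ← Real.rpow_add (by norm_num)]
    congr 1
    ring
  calc ‖dft r (haarPhi r l p) ω‖
      ≤ (2:ℝ)^(-(r:ℝ)/2) * ∑ t : Fin (2^r), ‖haarPhi r l p t‖ :=
        aux_abs_dft_le r _ ω
    _ ≤ (2:ℝ)^(-(r:ℝ)/2) * (((2^(r-l):ℕ):ℝ) * c) :=
        mul_le_mul_of_nonneg_left hstep (Real.rpow_nonneg (by norm_num) _)
    _ = (2:ℝ)^(-(l:ℝ)/2) := harith

noncomputable def someΦ (r l p : ℕ) (i : ℕ) : ℂ :=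
  if p * 2^(r-l) ≤ i ∧ i < p * 2^(r-l) + 2^(r-l-1) then
    (((2:ℝ) ^ (((l:ℝ) - r)/2) : ℝ) : ℂ)
  else if p * 2^(r-l) + 2^(r-l-1) ≤ i ∧ i < (p+1) * 2^(r-l) then
    -(((2:ℝ) ^ (((l:ℝ) - r)/2) : ℝ) : ℂ)
  else 0

lemma aux_haarPhi_eq (r l p : ℕ) (t : Fin (2^r)) : haarPhi r l p t = someΦ r l p (t:ℕ) := rfl

lemma aux_geom_abs (x : ℂ) (hx : x ≠ 1) (hx1 : ‖x‖ = 1) (b d : ℕ) (hbd : b ≤ d) :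
    ‖∑ i ∈ Finset.Ico b d, x^i‖ ≤ 2 / ‖x - 1‖ := by
  rw [geom_sum_Ico hx hbd, norm_div]
  have hpos : 0 < ‖x - 1‖ :=
    norm_pos_iff.mpr (sub_ne_zero.mpr hx)
  gcongr
  calc ‖x^d - x^b‖ ≤ ‖x^d‖ + ‖x^b‖ :=
        norm_sub_le _ _
    _ = 2 := by rw [norm_pow, norm_pow, hx1]; norm_num

lemma aux_phi_geom (r l p : ℕ) (hl : l < r) (hp : p < 2^l) (ω : ℤ) (hx : xw r ω ≠ 1) :
    ‖dft r (haarPhi r l p) ω‖ ≤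
      (2:ℝ)^(-(r:ℝ)/2) * ((2:ℝ)^(((l:ℝ)-(r:ℝ))/2) * (4 / ‖xw r ω - 1‖)) := by
  set x := xw r ω with hxdef
  set A := ‖x - 1‖ with hAdef
  have hApos : 0 < A := norm_pos_iff.mpr (sub_ne_zero.mpr hx)
  set cr : ℝ := (2:ℝ)^(((l:ℝ)-(r:ℝ))/2) with hcrdef
  have hcr : 0 ≤ cr := Real.rpow_nonneg (by norm_num) _
  set c : ℂ := (cr : ℂ) with hcdef
  set a := p * 2^(r-l) with hadef
  set hh := 2^(r-l-1) with hhdef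
  have h2h : 2^(r-l) = 2 * hh := by
    rw [hhdef, ← pow_succ']
    congr 1
    omega
  have hub : a + 2*hh ≤ 2^r := by
    have h1 : (p+1) * 2^(r-l) ≤ 2^l * 2^(r-l) := Nat.mul_le_mul_right _ hp
    rw [← pow_add] at h1
    have hrl : l + (r - l) = r := by omega
    rw [hrl] at h1
    calc a + 2*hh = (p+1) * 2^(r-l) := by rw [hadef, h2h]; ring
      _ ≤ 2^r := h1
  unfold dft
  rw [norm_mul, norm_inv, Complex.norm_real, Real.norm_eq_abs, abs_of_nonneg (Real.sqrt_nonneg _),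
    aux_sqrt_pow, ← Real.rpow_neg_one ((2:ℝ)^((r:ℝ)/2)), ← Real.rpow_mul (by norm_num),
    show (r:ℝ)/2 * (-1) = -(r:ℝ)/2 by ring]
  refine mul_le_mul_of_nonneg_left ?_ (Real.rpow_nonneg (by norm_num) _)
  simp only [aux_exp_eq, aux_haarPhi_eq, ← hxdef]
  rw [Fin.sum_univ_eq_sum_range (fun i => someΦ r l p i * x ^ i) (2^r)]
  have hzero : ∀ i ∈ Finset.range (2^r), i ∉ Finset.Ico a (a+2*hh) → someΦ r l p i * x ^ i = 0 := by
    intro i _ hi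
    rw [Finset.mem_Ico] at hi
    have h1 : someΦ r l p i = 0 := by
      unfold someΦ
      rw [← hadef, ← hhdef, show (p+1) * 2^(r-l) = a + 2*hh by rw [hadef, h2h]; ring]
      split_ifs <;> first | rfl | (exfalso; omega)
    rw [h1, zero_mul]
  have hsplit := Finset.sum_Ico_consecutive (fun i => someΦ r l p i * x ^ i)
    (show a ≤ a + hh by omega) (show a + hh ≤ a + 2*hh by omega)
  have hS1 : ∑ i ∈ Finset.Ico a (a+hh), someΦ r l p i * x ^ i
      = c * ∑ i ∈ Finset.Ico a (a+hh), x ^ i := by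
    rw [Finset.mul_sum]
    apply Finset.sum_congr rfl
    intro i hi
    rw [Finset.mem_Ico] at hi
    congr 1
    unfold someΦ
    rw [← hadef, ← hhdef, if_pos ⟨hi.1, hi.2⟩]
  have hS2 : ∑ i ∈ Finset.Ico (a+hh) (a+2*hh), someΦ r l p i * x ^ i
      = -c * ∑ i ∈ Finset.Ico (a+hh) (a+2*hh), x ^ i := by
    rw [Finset.mul_sum]
    apply Finset.sum_congr rfl
    intro i hi
    rw [Finset.mem_Ico] at hi
    congr 1
    unfold someΦ
    have hgh : 1 ≤ hh := Nat.one_le_two_pow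
    rw [← hadef, ← hhdef, show (p+1) * 2^(r-l) = a + 2*hh by rw [hadef, h2h]; ring,
      if_neg (by omega), if_pos ⟨hi.1, hi.2⟩]
  have hrw : ∑ i ∈ Finset.range (2^r), someΦ r l p i * x ^ i
      = c * ∑ i ∈ Finset.Ico a (a+hh), x ^ i
        + -c * ∑ i ∈ Finset.Ico (a+hh) (a+2*hh), x ^ i := by
    rw [← hS1, ← hS2, hsplit]
    exact (Finset.sum_subset (by
      intro i hi
      rw [Finset.mem_Ico] at hi
      rw [Finset.mem_range]
      omega) hzero).symm
  rw [hrw]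
  have hg1 := aux_geom_abs x hx (aux_abs_xw r ω) a (a+hh) (by omega)
  have hg2 := aux_geom_abs x hx (aux_abs_xw r ω) (a+hh) (a+2*hh) (by omega)
  have habsc : ‖c‖ = cr := by
    rw [hcdef, Complex.norm_real, Real.norm_eq_abs, abs_of_nonneg hcr]
  calc ‖c * ∑ i ∈ Finset.Ico a (a+hh), x ^ i
        + -c * ∑ i ∈ Finset.Ico (a+hh) (a+2*hh), x ^ i‖
      ≤ ‖c * ∑ i ∈ Finset.Ico a (a+hh), x ^ i‖
        + ‖-c * ∑ i ∈ Finset.Ico (a+hh) (a+2*hh), x ^ i‖ :=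
        norm_add_le _ _
    _ = cr * ‖∑ i ∈ Finset.Ico a (a+hh), x ^ i‖
        + cr * ‖∑ i ∈ Finset.Ico (a+hh) (a+2*hh), x ^ i‖ := by
        rw [norm_mul, norm_mul, norm_neg, habsc]
    _ ≤ cr * (2 / A) + cr * (2 / A) := by
        gcongr
    _ = cr * (4 / A) := by ring


lemma aux_pi_sq : (8:ℝ) ≤ Real.pi^2 := by
  nlinarith [Real.pi_gt_three]

lemma aux_phi_entry (r j l p : ℕ) (hr : 1 ≤ r) (hj : j ≤ r - 1) (hl : l ≤ r - 1)
    (hp : p < 2^l) (ω : ℤ) (hω : ω ∈ bandW j) :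
    ‖dft r (haarPhi r l p) ω‖ ≤
      Real.pi^2/4 * (2:ℝ)^(-(((j:ℝ) + |(j:ℝ)-(l:ℝ)|)/2)) := by
  have hπ := aux_pi_sq
  have hlr : l < r := by omega
  rcases le_or_gt j l with hjl | hlj
  · -- trivial bound suffices
    have habs : |(j:ℝ)-(l:ℝ)| = (l:ℝ) - j := by
      rw [abs_of_nonpos (by simp only [sub_nonpos]; exact_mod_cast hjl)]
      ring
    rw [habs, show -(((j:ℝ) + ((l:ℝ)-(j:ℝ)))/2) = -(l:ℝ)/2 by ring]
    refine (aux_phi_trivial r l p hlr ω).trans ?_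
    nlinarith [Real.rpow_pos_of_pos (show (0:ℝ) < 2 by norm_num) (-(l:ℝ)/2)]
  · -- geometric bound
    have hj0 : j ≠ 0 := by omega
    have hne : ω ≠ 0 := aux_band_ne hj0 hω
    have hub2 : |(ω:ℝ)| ≤ 2^r / 2 := aux_band_ub_real hr hj hω
    have hx : xw r ω ≠ 1 := aux_xw_ne_one r ω hne hub2
    set A := ‖xw r ω - 1‖ with hAdef
    have hApos : 0 < A := norm_pos_iff.mpr (sub_ne_zero.mpr hx)
    have hωlb : (2:ℝ)^j ≤ 2 * |(ω:ℝ)| := by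
      have h1 := aux_band_lb hω hne
      have h2 : (((2:ℤ)^j : ℤ):ℝ) ≤ ((2 * |ω| : ℤ):ℝ) := by exact_mod_cast h1
      push_cast at h2
      exact h2
    have hA : (2:ℝ)^j * 2 / 2^r ≤ A := by
      refine le_trans ?_ (aux_xw_lb r ω hub2)
      apply div_le_div_of_nonneg_right ?_ (by positivity)
      linarith
    refine (aux_phi_geom r l p hlr hp ω hx).trans ?_
    have habs : |(j:ℝ)-(l:ℝ)| = (j:ℝ) - l := by
      rw [abs_of_nonneg (by simp only [sub_nonneg]; exact_mod_cast hlj.le)]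
    rw [habs, show -(((j:ℝ) + ((j:ℝ)-(l:ℝ)))/2) = (l:ℝ)/2 - (j:ℝ) by ring]
    have hlb : (0:ℝ) < (2:ℝ)^j * 2 / 2^r := by positivity
    have step1 : (4:ℝ) / A ≤ 4 / ((2:ℝ)^j * 2 / 2^r) :=
      div_le_div_of_nonneg_left (by norm_num) hlb hA
    have hdiv : (4:ℝ)/((2:ℝ)^j*2/2^r) = (2:ℝ)^(r+1-j : ℕ) := by
      rw [pow_sub₀ (2:ℝ) (by norm_num) (by omega), pow_succ]
      field_simp
      ring
    have hcast : ((r+1-j : ℕ) : ℝ) = (r:ℝ) + 1 - j := by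
      have hjr1 : j ≤ r + 1 := by omega
      push_cast [Nat.cast_sub hjr1]
      ring
    have collapse : (2:ℝ)^(-(r:ℝ)/2) * ((2:ℝ)^(((l:ℝ)-(r:ℝ))/2) * (2:ℝ)^(r+1-j : ℕ)) =
        (2:ℝ)^(1 + (l:ℝ)/2 - (j:ℝ)) := by
      rw [show ((2:ℝ)^(r+1-j : ℕ)) = (2:ℝ)^(((r+1-j : ℕ)):ℝ) from (Real.rpow_natCast _ _).symm,
        hcast, ← Real.rpow_add (by norm_num), ← Real.rpow_add (by norm_num)]
      congr 1
      ring
    calc (2:ℝ)^(-(r:ℝ)/2) * ((2:ℝ)^(((l:ℝ)-(r:ℝ))/2) * (4 / A))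
        ≤ (2:ℝ)^(-(r:ℝ)/2) * ((2:ℝ)^(((l:ℝ)-(r:ℝ))/2) * (2:ℝ)^(r+1-j : ℕ)) := by
          rw [← hdiv]
          exact mul_le_mul_of_nonneg_left
            (mul_le_mul_of_nonneg_left step1 (Real.rpow_nonneg (by norm_num) _))
            (Real.rpow_nonneg (by norm_num) _)
      _ = (2:ℝ)^(1 + (l:ℝ)/2 - (j:ℝ)) := collapse
      _ = 2 * (2:ℝ)^((l:ℝ)/2 - (j:ℝ)) := by
          rw [show (1 + (l:ℝ)/2 - (j:ℝ)) = 1 + ((l:ℝ)/2 - (j:ℝ)) by ring,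
            Real.rpow_add (by norm_num), Real.rpow_one]
      _ ≤ Real.pi^2/4 * (2:ℝ)^((l:ℝ)/2 - (j:ℝ)) :=
          mul_le_mul_of_nonneg_right (by linarith) (Real.rpow_nonneg (by norm_num) _)

lemma aux_psi_entry (r j : ℕ) (hr : 1 ≤ r) (hj : j ≤ r - 1) (ω : ℤ) (hω : ω ∈ bandW j) :
    ‖dft r (haarPsi r) ω‖ ≤
      Real.pi^2/4 * (2:ℝ)^(-(((j:ℝ) + |(j:ℝ)-((0:ℕ):ℝ)|)/2)) := by
  have hπ := aux_pi_sq
  by_cases hne : ω = 0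
  · have hj0 : j = 0 := by
      by_contra h
      exact (aux_band_ne h hω) hne
    subst hj0
    subst hne
    refine (aux_dft_psi_zero r).trans ?_
    norm_num
    nlinarith
  · have hub2 : |(ω:ℝ)| ≤ 2^r / 2 := aux_band_ub_real hr hj hω
    have hx : xw r ω ≠ 1 := aux_xw_ne_one r ω hne hub2
    rw [aux_dft_psi r ω hx, norm_zero]
    positivity

lemma aux_entry_bound (r j l : ℕ) (hr : 1 ≤ r) (hj : j ≤ r - 1) (hl : l ≤ r - 1)
    (ω : ℤ) (hω : ω ∈ bandW j) (q : ℕ) (hq : q < numCols l) :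
    ‖Uentry r l ω q‖ ≤
      Real.pi^2/4 * (2:ℝ)^(-(((j:ℝ) + |(j:ℝ)-(l:ℝ)|)/2)) := by
  unfold Uentry
  by_cases hl0 : l = 0
  · subst hl0
    rw [if_pos rfl]
    by_cases hq0 : q = 0
    · rw [if_pos hq0]
      exact aux_psi_entry r j hr hj ω hω
    · rw [if_neg hq0]
      exact aux_phi_entry r j 0 0 hr hj hl (by norm_num) ω hω
  · rw [if_neg hl0]
    have hq' : q < 2^l := by
      unfold numCols at hq
      rwa [if_neg hl0] at hq
    exact aux_phi_entry r j l q hr hj hl hq' ω hω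

/-- For `r ≥ 1` and `0 ≤ j, l ≤ r-1`, the local coherence of the Fourier–Haar matrix satisfies
`μ(j,l) ≤ (π⁴/16) 2^{-j} 2^{-|j-l|/2}`. -/
theorem localCoh_le (r j l : ℕ) (hr : 1 ≤ r) (hj : j ≤ r - 1) (hl : l ≤ r - 1) :
    localCoh r hr j l ≤ (Real.pi^4 / 16) * (2:ℝ)^(-(j:ℝ)) * (2:ℝ)^(-|(j:ℝ) - (l:ℝ)|/2) := by
  have hπ := aux_pi_sq
  have hcoh : ∀ l', l' ≤ r-1 → Real.sqrt (coherence r j l') ≤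
      Real.pi^2/4 * (2:ℝ)^(-(((j:ℝ) + |(j:ℝ)-(l':ℝ)|)/2)) := by
    intro l' hl'
    set B : ℝ := Real.pi^2/4 * (2:ℝ)^(-(((j:ℝ) + |(j:ℝ)-(l':ℝ)|)/2)) with hBdef
    have hBpos : 0 < B := by
      have := Real.pi_pos
      have := Real.rpow_pos_of_pos (show (0:ℝ) < 2 by norm_num) (-(((j:ℝ) + |(j:ℝ)-(l':ℝ)|)/2))
      positivity
    have h1 : coherence r j l' ≤ B^2 := by
      apply Finset.sup'_le
      rintro ⟨ω, q⟩ hq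
      rw [Finset.mem_product] at hq
      have hb := aux_entry_bound r j l' hr hj hl' ω hq.1 q (Finset.mem_range.mp hq.2)
      exact pow_le_pow_left₀ (norm_nonneg _) hb 2
    calc Real.sqrt (coherence r j l') ≤ Real.sqrt (B^2) := Real.sqrt_le_sqrt h1
      _ = B := Real.sqrt_sq hBpos.le
  have hsup : (Finset.range r).sup' ⟨0, Finset.mem_range.mpr hr⟩
      (fun l' => Real.sqrt (coherence r j l')) ≤ Real.pi^2/4 * (2:ℝ)^(-(j:ℝ)/2) := by
    apply Finset.sup'_le
    intro l' hl'
    rw [Finset.mem_range] at hl'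
    refine (hcoh l' (by omega)).trans ?_
    refine mul_le_mul_of_nonneg_left ?_ (by positivity)
    apply Real.rpow_le_rpow_of_exponent_le (by norm_num)
    have := abs_nonneg ((j:ℝ) - l')
    linarith
  have hnn : (0:ℝ) ≤ (Finset.range r).sup' ⟨0, Finset.mem_range.mpr hr⟩
      (fun l' => Real.sqrt (coherence r j l')) :=
    le_trans (Real.sqrt_nonneg (coherence r j 0))
      (Finset.le_sup' (fun l' => Real.sqrt (coherence r j l')) (Finset.mem_range.mpr hr))
  unfold localCoh
  have h1 := hcoh l hl
  have e : (2:ℝ)^(-(((j:ℝ) + |(j:ℝ)-(l:ℝ)|)/2)) * (2:ℝ)^(-(j:ℝ)/2)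
      = (2:ℝ)^(-(j:ℝ)) * (2:ℝ)^(-|(j:ℝ)-(l:ℝ)|/2) := by
    rw [← Real.rpow_add (by norm_num), ← Real.rpow_add (by norm_num)]
    congr 1
    ring
  calc Real.sqrt (coherence r j l) * (Finset.range r).sup' ⟨0, Finset.mem_range.mpr hr⟩
        (fun l' => Real.sqrt (coherence r j l'))
      ≤ (Real.pi^2/4 * (2:ℝ)^(-(((j:ℝ) + |(j:ℝ)-(l:ℝ)|)/2)))
        * (Real.pi^2/4 * (2:ℝ)^(-(j:ℝ)/2)) := by
        apply mul_le_mul h1 hsup hnn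
        have := Real.pi_pos
        have := Real.rpow_pos_of_pos (show (0:ℝ) < 2 by norm_num) (-(((j:ℝ) + |(j:ℝ)-(l:ℝ)|)/2))
        positivity
    _ = Real.pi^4/16 * ((2:ℝ)^(-(((j:ℝ) + |(j:ℝ)-(l:ℝ)|)/2)) * (2:ℝ)^(-(j:ℝ)/2)) := by ring
    _ = (Real.pi^4 / 16) * (2:ℝ)^(-(j:ℝ)) * (2:ℝ)^(-|(j:ℝ) - (l:ℝ)|/2) := by rw [e]; ring
end

section
/- Let r ∈ ℕ, r ≥ 1, let 1 ≤ l ≤ r−1 and 1 ≤ j ≤ r−1, let z ∈ ℂ^{2^l}, and let G(x) = Σ_{p=0}^{2^l−1} z_p e^{2πipx}. If j ≥ l then Σ_{ω∈W_j} |G(ω/2^l)|² = 2^j · ‖z‖₂², and if j < l then Σ_{ω∈W_j} |G(ω/2^l)|² ≤ 2^l · ‖z‖₂². -/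
/-- The 1-periodic trigonometric polynomial `G(x) = ∑_{p=0}^{2^l-1} z_p e^{2πipx}`. -/
noncomputable def trigPoly (l : ℕ) (z : Fin (2^l) → ℂ) (x : ℝ) : ℂ :=
  ∑ p : Fin (2^l), z p * Complex.exp (2 * Real.pi * Complex.I * ((p : ℕ) : ℂ) * (x : ℂ))

/- ===================== Auxiliary lemmas ===================== -/

private lemma SSTPB.orth (N : ℕ) (hN : 0 < N) (a : ℤ) :
    ∑ k ∈ Finset.range N, Complex.exp (2*Real.pi*Complex.I*(a:ℂ)*(k:ℂ)/(N:ℂ)) =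
      if (N:ℤ) ∣ a then (N:ℂ) else 0 := by
  have hN' : (N:ℂ) ≠ 0 := Nat.cast_ne_zero.mpr hN.ne'
  have hterm : ∀ k : ℕ, Complex.exp (2*Real.pi*Complex.I*(a:ℂ)*(k:ℂ)/(N:ℂ))
      = (Complex.exp (2*Real.pi*Complex.I*(a:ℂ)/(N:ℂ)))^k := by
    intro k
    rw [← Complex.exp_nat_mul]
    congr 1
    ring
  simp only [hterm]
  by_cases hd : (N:ℤ) ∣ a
  · obtain ⟨m, hm⟩ := id hd
    have h1 : Complex.exp (2*Real.pi*Complex.I*(a:ℂ)/(N:ℂ)) = 1 := by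
      have : 2*Real.pi*Complex.I*(a:ℂ)/(N:ℂ) = (m:ℂ) * (2*Real.pi*Complex.I) := by
        field_simp
        push_cast [hm]
        ring
      rw [this, Complex.exp_int_mul_two_pi_mul_I]
    simp [h1, hd]
  · have h2 : (2:ℂ)*Real.pi*Complex.I ≠ 0 := by
      simp [Real.pi_ne_zero, Complex.I_ne_zero]
    have hz1 : Complex.exp (2*Real.pi*Complex.I*(a:ℂ)/(N:ℂ)) ≠ 1 := by
      intro h
      obtain ⟨n, hn⟩ := Complex.exp_eq_one_iff.mp h
      apply hd
      refine ⟨n, ?_⟩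
      have h3 : 2*Real.pi*Complex.I*(a:ℂ) = 2*Real.pi*Complex.I*((n:ℂ)*(N:ℂ)) := by
        field_simp at hn
        linear_combination (2*Real.pi*Complex.I) * hn
      have h4 : (a:ℂ) = (n:ℂ)*(N:ℂ) := mul_left_cancel₀ h2 h3
      have : a = n * (N:ℤ) := by exact_mod_cast h4
      simpa [mul_comm] using this
    rw [geom_sum_eq hz1]
    have hN2 : Complex.exp (2*Real.pi*Complex.I*(a:ℂ)/(N:ℂ)) ^ N = 1 := by
      rw [← Complex.exp_nat_mul]
      have : (N:ℂ) * (2*Real.pi*Complex.I*(a:ℂ)/(N:ℂ)) = (a:ℂ)*(2*Real.pi*Complex.I) := by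
        field_simp
      rw [this, Complex.exp_int_mul_two_pi_mul_I]
    rw [hN2]
    simp [hd]

private lemma SSTPB.trig_periodic (l : ℕ) (z : Fin (2^l) → ℂ) (ω ω' : ℤ)
    (h : ((2:ℤ)^l) ∣ (ω - ω')) :
    trigPoly l z ((ω:ℝ)/2^l) = trigPoly l z ((ω':ℝ)/2^l) := by
  obtain ⟨m, hm⟩ := h
  have hω : (ω:ℂ) = (ω':ℂ) + (2:ℂ)^l * (m:ℂ) := by
    have : ω = ω' + 2^l * m := by omega
    exact_mod_cast congrArg (Int.cast : ℤ → ℂ) this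
  have h2l : ((2:ℂ)^l) ≠ 0 := pow_ne_zero _ two_ne_zero
  unfold trigPoly
  refine Finset.sum_congr rfl fun p _ => ?_
  congr 1
  have harg : 2*Real.pi*Complex.I*((p:ℕ):ℂ)*((((ω:ℝ)/2^l : ℝ)):ℂ)
      = 2*Real.pi*Complex.I*((p:ℕ):ℂ)*((((ω':ℝ)/2^l : ℝ)):ℂ)
        + (((p:ℕ)*m : ℤ):ℂ)*(2*Real.pi*Complex.I) := by
    push_cast
    rw [hω]
    field_simp
  rw [harg, Complex.exp_add, Complex.exp_int_mul_two_pi_mul_I, mul_one]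

private lemma SSTPB.sum_Ico_zmod {M : Type*} [AddCommMonoid M] (N : ℕ) [NeZero N]
    (h : ZMod N → M) (a : ℤ) :
    ∑ ω ∈ Finset.Ico a (a + N), h (ω : ZMod N) = ∑ x : ZMod N, h x := by
  have hN : 0 < N := Nat.pos_of_ne_zero (NeZero.ne N)
  refine Finset.sum_nbij' (i := fun ω => (ω : ZMod N))
    (j := fun x => a + (((x - (a:ZMod N)).val : ℕ) : ℤ)) ?_ ?_ ?_ ?_ ?_
  · intro ω hω
    exact Finset.mem_univ _
  · intro x hx
    simp only [Finset.mem_Ico]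
    constructor
    · linarith [Int.ofNat_nonneg ((x - (a:ZMod N)).val)]
    · have := ZMod.val_lt (x - (a:ZMod N))
      omega
  · intro ω hω
    simp only [Finset.mem_Ico] at hω
    show a + ((((ω : ZMod N) - (a:ZMod N)).val : ℕ) : ℤ) = ω
    have h1 : ((ω : ZMod N) - (a:ZMod N)) = (((ω - a) : ℤ) : ZMod N) := by push_cast; ring
    have h2 : (((ω - a).toNat : ℤ)) = ω - a := Int.toNat_of_nonneg (by omega)
    rw [h1, ← h2, Int.cast_natCast, ZMod.val_cast_of_lt (by omega)]
    omega
  · intro x hx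
    show (((a + (((x - (a:ZMod N)).val : ℕ) : ℤ)) : ℤ) : ZMod N) = x
    rw [Int.cast_add, Int.cast_natCast, ZMod.natCast_val, ZMod.cast_id]
    ring
  · intro ω hω
    rfl

private lemma SSTPB.sum_Ico_zmod_mul {M : Type*} [AddCommMonoid M] (N : ℕ) [NeZero N]
    (h : ZMod N → M) (a : ℤ) (m : ℕ) :
    ∑ ω ∈ Finset.Ico a (a + m * N), h (ω : ZMod N) = m • ∑ x : ZMod N, h x := by
  induction m generalizing a with
  | zero => simp
  | succ m ih =>
      have hN : 0 < N := Nat.pos_of_ne_zero (NeZero.ne N)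
      have h1 : a ≤ a + (N:ℤ) := by omega
      have h3 : a + ((m+1:ℕ):ℤ) * N = (a + N) + (m:ℕ) * N := by push_cast; ring
      have h2' : a + (N:ℤ) ≤ (a + N) + (m:ℕ) * N := by nlinarith [Int.ofNat_nonneg m, Int.ofNat_nonneg N]
      rw [h3, ← Finset.Ico_union_Ico_eq_Ico h1 h2',
        Finset.sum_union (Finset.Ico_disjoint_Ico_consecutive _ _ _),
        SSTPB.sum_Ico_zmod N h a, ih (a + N), succ_nsmul, add_comm]

private lemma SSTPB.parseval (l : ℕ) (z : Fin (2^l) → ℂ) :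
    ∑ k ∈ Finset.range (2^l), ‖trigPoly l z ((k:ℝ)/2^l)‖^2
      = 2^l * ∑ p : Fin (2^l), ‖z p‖^2 := by
  have hN : (0:ℕ) < 2^l := pow_pos (by norm_num) l
  have hNc : ((2^l : ℕ) : ℂ) ≠ 0 := Nat.cast_ne_zero.mpr hN.ne'
  have hG : ∀ k : ℕ, ((‖trigPoly l z ((k:ℝ)/2^l)‖^2 : ℝ) : ℂ)
      = trigPoly l z ((k:ℝ)/2^l) * (starRingEnd ℂ) (trigPoly l z ((k:ℝ)/2^l)) := by
    intro k
    rw [Complex.mul_conj, ← Complex.sq_norm]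
  have expand : ∀ k : ℕ,
      trigPoly l z ((k:ℝ)/2^l) * (starRingEnd ℂ) (trigPoly l z ((k:ℝ)/2^l))
      = ∑ p : Fin (2^l), ∑ q : Fin (2^l), z p * (starRingEnd ℂ) (z q) *
          Complex.exp (2*Real.pi*Complex.I*((((p:ℕ):ℤ) - ((q:ℕ):ℤ) : ℤ):ℂ)*(k:ℂ)/((2^l : ℕ):ℂ)) := by
    intro k
    unfold trigPoly
    rw [map_sum, Finset.sum_mul_sum]
    refine Finset.sum_congr rfl fun p _ => Finset.sum_congr rfl fun q _ => ?_
    rw [map_mul, ← Complex.exp_conj]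
    rw [mul_mul_mul_comm, ← Complex.exp_add]
    congr 1
    simp only [map_mul, Complex.conj_I, Complex.conj_ofReal, map_ofNat, map_natCast]
    push_cast
    field_simp
    ring
  have key : ∑ k ∈ Finset.range (2^l), ((‖trigPoly l z ((k:ℝ)/2^l)‖^2 : ℝ) : ℂ)
      = (((2^l : ℕ):ℂ)) * ∑ p : Fin (2^l), ((‖z p‖^2 : ℝ) : ℂ) := by
    calc ∑ k ∈ Finset.range (2^l), ((‖trigPoly l z ((k:ℝ)/2^l)‖^2 : ℝ) : ℂ)
        = ∑ k ∈ Finset.range (2^l), ∑ p : Fin (2^l), ∑ q : Fin (2^l),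
            z p * (starRingEnd ℂ) (z q) *
            Complex.exp (2*Real.pi*Complex.I*((((p:ℕ):ℤ) - ((q:ℕ):ℤ) : ℤ):ℂ)*(k:ℂ)/((2^l : ℕ):ℂ)) := by
          exact Finset.sum_congr rfl fun k _ => by rw [hG k, expand k]
      _ = ∑ p : Fin (2^l), ∑ q : Fin (2^l), ∑ k ∈ Finset.range (2^l),
            z p * (starRingEnd ℂ) (z q) *
            Complex.exp (2*Real.pi*Complex.I*((((p:ℕ):ℤ) - ((q:ℕ):ℤ) : ℤ):ℂ)*(k:ℂ)/((2^l : ℕ):ℂ)) := by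
          rw [Finset.sum_comm]
          exact Finset.sum_congr rfl fun p _ => Finset.sum_comm
      _ = ∑ p : Fin (2^l), ∑ q : Fin (2^l),
            z p * (starRingEnd ℂ) (z q) *
            (if ((2^l : ℕ):ℤ) ∣ (((p:ℕ):ℤ) - ((q:ℕ):ℤ)) then (((2^l : ℕ)):ℂ) else 0) := by
          refine Finset.sum_congr rfl fun p _ => Finset.sum_congr rfl fun q _ => ?_
          rw [← Finset.mul_sum, SSTPB.orth (2^l) hN]
      _ = ∑ p : Fin (2^l), z p * (starRingEnd ℂ) (z p) * (((2^l : ℕ)):ℂ) := by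
          refine Finset.sum_congr rfl fun p _ => ?_
          have hiff : ∀ q : Fin (2^l), (((2^l : ℕ):ℤ) ∣ (((p:ℕ):ℤ) - ((q:ℕ):ℤ))) ↔ q = p := by
            intro q
            constructor
            · intro hdvd
              have hp := p.isLt; have hq := q.isLt
              have h1 : ((p:ℕ):ℤ) - ((q:ℕ):ℤ) = 0 :=
                Int.eq_zero_of_dvd_of_natAbs_lt_natAbs hdvd (by omega)
              exact Fin.ext (by omega)
            · rintro rfl; simp
          simp only [hiff]
          simp
      _ = (((2^l : ℕ):ℂ)) * ∑ p : Fin (2^l), ((‖z p‖^2 : ℝ) : ℂ) := by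
          rw [Finset.mul_sum]
          refine Finset.sum_congr rfl fun p _ => ?_
          rw [Complex.mul_conj, ← Complex.sq_norm]
          ring
  have := key
  rw [← Complex.ofReal_sum] at this
  rw [show (((2^l : ℕ):ℂ)) * ∑ p : Fin (2^l), ((‖z p‖^2 : ℝ) : ℂ)
      = (((2^l * ∑ p : Fin (2^l), ‖z p‖^2 : ℝ)) : ℂ) by push_cast; ring] at this
  exact_mod_cast this

private lemma SSTPB.Icc_eq_Ico (a b : ℤ) : Finset.Icc a b = Finset.Ico a (b+1) := by
  ext x
  simp only [Finset.mem_Icc, Finset.mem_Ico]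
  omega

/-- For `1 ≤ l, j ≤ r-1` and `G(x) = ∑_{p=0}^{2^l-1} z_p e^{2πipx}`:
if `j ≥ l` then `∑_{ω ∈ W_j} |G(ω/2^l)|² = 2^j ‖z‖₂²`, and if `j < l` then
`∑_{ω ∈ W_j} |G(ω/2^l)|² ≤ 2^l ‖z‖₂²`. -/
theorem sum_sq_trigPoly_bandW (r l j : ℕ) (hr : 1 ≤ r) (hl1 : 1 ≤ l) (hl2 : l ≤ r - 1)
    (hj1 : 1 ≤ j) (hj2 : j ≤ r - 1) (z : Fin (2^l) → ℂ) :
    (l ≤ j → ∑ ω ∈ bandW j, ‖trigPoly l z ((ω : ℝ) / 2^l)‖^2 =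
        2^j * ∑ p : Fin (2^l), ‖z p‖^2) ∧
    (j < l → ∑ ω ∈ bandW j, ‖trigPoly l z ((ω : ℝ) / 2^l)‖^2 ≤
        2^l * ∑ p : Fin (2^l), ‖z p‖^2) := by
  have hNpos : (0:ℕ) < 2^l := pow_pos (by norm_num) l
  haveI : NeZero ((2:ℕ)^l) := ⟨hNpos.ne'⟩
  set h : ZMod (2^l) → ℝ :=
    fun x => ‖trigPoly l z ((((x.val : ℕ) : ℤ) : ℝ)/2^l)‖^2 with hh
  have hfh : ∀ ω : ℤ, ‖trigPoly l z ((ω:ℝ)/2^l)‖^2 = h ((ω : ZMod (2^l))) := by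
    intro ω
    have hcast : ((((((ω : ZMod (2^l)).val : ℕ) : ℤ)) : ℤ) : ZMod (2^l)) = (ω : ZMod (2^l)) := by
      rw [Int.cast_natCast, ZMod.natCast_val, ZMod.cast_id]
    have hz : (((ω - ((((ω : ZMod (2^l)).val : ℕ) : ℤ))) : ℤ) : ZMod (2^l)) = 0 := by
      rw [Int.cast_sub, hcast, sub_self]
    have h2 := (ZMod.intCast_zmod_eq_zero_iff_dvd _ _).mp hz
    have hd : ((2:ℤ)^l) ∣ (ω - ((((ω : ZMod (2^l)).val : ℕ) : ℤ))) := by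
      exact_mod_cast h2
    simp only [hh]
    exact congrArg (fun w => ‖w‖ ^ 2) (SSTPB.trig_periodic l z ω _ hd)
  have hS : ∑ x : ZMod (2^l), h x = 2^l * ∑ p : Fin (2^l), ‖z p‖^2 := by
    rw [← SSTPB.parseval l z]
    refine Finset.sum_nbij' (i := fun (x : ZMod (2^l)) => x.val)
      (j := fun (k : ℕ) => (k : ZMod (2^l))) ?_ ?_ ?_ ?_ ?_
    · intro x _
      exact Finset.mem_range.mpr (ZMod.val_lt x)
    · intro k _
      exact Finset.mem_univ _
    · intro x _
      rw [ZMod.natCast_val, ZMod.cast_id]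
    · intro k hk
      rw [ZMod.val_cast_of_lt (Finset.mem_range.mp hk)]
    · intro x _
      simp only [hh, Int.cast_natCast]
  have hbW : bandW j = Finset.Icc (-(2:ℤ)^j + 1) (-(2:ℤ)^(j-1)) ∪
      Finset.Icc ((2:ℤ)^(j-1) + 1) ((2:ℤ)^j) := by
    rw [bandW, if_neg (by omega)]
  have hp1 : (0:ℤ) < 2^(j-1) := pow_pos (by norm_num) _
  have hjj : (2:ℤ)^j = 2^(j-1) * 2 := by
    rw [← pow_succ]
    congr 1
    omega
  have hdisj : Disjoint (Finset.Icc (-(2:ℤ)^j + 1) (-(2:ℤ)^(j-1)))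
      (Finset.Icc ((2:ℤ)^(j-1) + 1) ((2:ℤ)^j)) := by
    refine Finset.disjoint_left.mpr ?_
    intro x hx hy
    simp only [Finset.mem_Icc] at hx hy
    omega
  constructor
  · -- case l ≤ j
    intro hlj
    have hshift : ∑ ω ∈ Finset.Icc ((2:ℤ)^(j-1) + 1) ((2:ℤ)^j),
          ‖trigPoly l z ((ω:ℝ)/2^l)‖^2
        = ∑ ω ∈ Finset.Icc (-(2:ℤ)^(j-1) + 1) 0,
          ‖trigPoly l z ((ω:ℝ)/2^l)‖^2 := by
      have hmapset : Finset.Icc ((2:ℤ)^(j-1)+1) ((2:ℤ)^j)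
          = (Finset.Icc (-(2:ℤ)^(j-1)+1) 0).map (addRightEmbedding ((2:ℤ)^j)) := by
        rw [Finset.map_add_right_Icc]
        congr 1 <;> omega
      rw [hmapset, Finset.sum_map]
      refine Finset.sum_congr rfl fun ω _ => ?_
      have hd : ((2:ℤ)^l) ∣ ((ω + 2^j) - ω) := by
        refine ⟨2^(j-l), ?_⟩
        rw [show (ω + 2^j) - ω = 2^j by ring, ← pow_add]
        congr 1
        omega
      show ‖trigPoly l z (((ω + 2^j : ℤ):ℝ)/2^l)‖^2 = _
      rw [SSTPB.trig_periodic l z (ω + 2^j) ω hd]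
    rw [hbW, Finset.sum_union hdisj, hshift]
    have hsum : ∑ ω ∈ Finset.Icc (-(2:ℤ)^j + 1) (-(2:ℤ)^(j-1)),
          ‖trigPoly l z ((ω:ℝ)/2^l)‖^2
        + ∑ ω ∈ Finset.Icc (-(2:ℤ)^(j-1) + 1) 0,
          ‖trigPoly l z ((ω:ℝ)/2^l)‖^2
        = ∑ ω ∈ Finset.Ico (-(2:ℤ)^j + 1) 1,
          ‖trigPoly l z ((ω:ℝ)/2^l)‖^2 := by
      rw [SSTPB.Icc_eq_Ico, SSTPB.Icc_eq_Ico,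
        ← Finset.sum_union (Finset.Ico_disjoint_Ico_consecutive _ _ _),
        Finset.Ico_union_Ico_eq_Ico (by omega) (by omega)]
      norm_num
    rw [hsum]
    have hlen : (1:ℤ) = (-(2:ℤ)^j + 1) + ((2^(j-l) : ℕ) : ℤ) * ((2^l : ℕ) : ℤ) := by
      push_cast
      rw [← pow_add]
      have : j - l + l = j := by omega
      rw [this]
      ring
    rw [show ∑ ω ∈ Finset.Ico (-(2:ℤ)^j + 1) 1,
          ‖trigPoly l z ((ω:ℝ)/2^l)‖^2
        = ∑ ω ∈ Finset.Ico (-(2:ℤ)^j + 1) 1, h ((ω : ZMod (2^l)))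
        from Finset.sum_congr rfl fun ω _ => hfh ω]
    have hmul := SSTPB.sum_Ico_zmod_mul (2^l) h (-(2:ℤ)^j + 1) (2^(j-l))
    rw [show (-(2:ℤ)^j + 1) + ((2^(j-l) : ℕ) : ℤ) * ((2^l : ℕ) : ℤ) = 1 from hlen.symm] at hmul
    rw [hmul, hS, nsmul_eq_mul]
    push_cast
    rw [← mul_assoc, ← pow_add]
    congr 2
    omega
  · -- case j < l
    intro hjl
    have hinj : ∀ ω₁ ∈ bandW j, ∀ ω₂ ∈ bandW j,
        (ω₁ : ZMod (2^l)) = (ω₂ : ZMod (2^l)) → ω₁ = ω₂ := by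
      intro ω₁ h1 ω₂ h2 heq
      have hmod := (ZMod.intCast_eq_intCast_iff _ _ _).mp heq
      have hdvd' : (((2:ℕ)^l : ℕ) : ℤ) ∣ ω₂ - ω₁ := Int.ModEq.dvd hmod
      have hdvd : ((2:ℤ)^l) ∣ ω₂ - ω₁ := by exact_mod_cast hdvd'
      simp only [hbW, Finset.mem_union, Finset.mem_Icc] at h1 h2
      have hb2 : (2:ℤ) * 2^j ≤ 2^l := by
        rw [show (2:ℤ) * 2^j = 2^(j+1) by rw [pow_succ]; ring]
        exact pow_le_pow_right₀ (by norm_num) (by omega)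
      have hl0 : (0:ℤ) < 2^l := pow_pos (by norm_num) _
      have hz : ω₂ - ω₁ = 0 :=
        Int.eq_zero_of_dvd_of_natAbs_lt_natAbs hdvd (by omega)
      omega
    calc ∑ ω ∈ bandW j, ‖trigPoly l z ((ω:ℝ)/2^l)‖^2
        = ∑ ω ∈ bandW j, h ((ω : ZMod (2^l))) :=
          Finset.sum_congr rfl fun ω _ => hfh ω
      _ = ∑ x ∈ (bandW j).image (fun ω : ℤ => (ω : ZMod (2^l))), h x :=
          (Finset.sum_image hinj).symm
      _ ≤ ∑ x : ZMod (2^l), h x := by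
          refine Finset.sum_le_sum_of_subset_of_nonneg (Finset.subset_univ _) ?_
          intro x _ _
          simp only [hh]
          positivity
      _ = 2^l * ∑ p : Fin (2^l), ‖z p‖^2 := hS
end
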